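/- arXiv:math/0605085 — 4 statements merged into one kernel-verified Lean document; each statement's English description precedes it below -/
import Mathlib

section
/- Let W be a 5-dimensional vector space over ℂ and let α ∈ ⋀³W be nonzero. Then there exist a nonzero vector v ∈ W and an element β ∈ ⋀²W such that α = v∧β (every 3-vector on a 5-dimensional space is divisible by a nonzero vector). -/
open ExteriorAlgebra

namespace Wedge3Aux

variable {W : Type*} [AddCommGroup W] [Module ℂ W]

noncomputable def cL (f : Module.Dual ℂ W) :
    ExteriorAlgebra ℂ W →ₗ[ℂ] ExteriorAlgebra ℂ W :=
  CliffordAlgebra.contractLeft f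

lemma cL_ι_mul (f : Module.Dual ℂ W) (a : W) (x : ExteriorAlgebra ℂ W) :
    cL f (ι ℂ a * x) = f a • x - ι ℂ a * cL f x :=
  CliffordAlgebra.contractLeft_ι_mul _ _ _

lemma cL_ι (f : Module.Dual ℂ W) (a : W) :
    cL f (ι ℂ a) = algebraMap ℂ _ (f a) :=
  CliffordAlgebra.contractLeft_ι _ _ a

lemma cL_algebraMap (f : Module.Dual ℂ W) (r : ℂ) :
    cL f (algebraMap ℂ (ExteriorAlgebra ℂ W) r) = 0 :=
  CliffordAlgebra.contractLeft_algebraMap _ _ r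

local notation "P" => (LinearMap.range (ι ℂ : W →ₗ[ℂ] ExteriorAlgebra ℂ W))

/-- contraction lowers degree -/
lemma cL_mem (n : ℕ) (f : Module.Dual ℂ W) :
    ∀ x ∈ ⋀[ℂ]^(n+1) W, cL f x ∈ ⋀[ℂ]^n W := by
  induction n with
  | zero =>
    intro x hx
    have hx' : x ∈ P ^ 1 := hx
    rw [pow_one] at hx'
    obtain ⟨m, rfl⟩ := hx'
    rw [cL_ι]
    exact Submodule.algebraMap_mem _
  | succ n ih =>
    intro x hx
    have hx' : x ∈ P * P ^ (n+1) := by rw [← pow_succ']; exact hx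
    refine Submodule.mul_induction_on hx' ?_ ?_
    · rintro _ ⟨a, rfl⟩ z hz
      rw [cL_ι_mul]
      refine sub_mem (Submodule.smul_mem _ _ hz) ?_
      have h1 : cL f z ∈ P ^ n := ih z hz
      have h2 : ι ℂ a * cL f z ∈ P * P ^ n :=
        Submodule.mul_mem_mul (LinearMap.mem_range_self _ _) h1
      rw [← pow_succ'] at h2
      exact h2
    · intro a b ha hb
      rw [map_add]
      exact add_mem ha hb

lemma ι_anticomm (a w : W) : ι ℂ a * ι ℂ w = -(ι ℂ w * ι ℂ a) :=
  eq_neg_of_add_eq_zero_left (ι_add_mul_swap a w)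

lemma mul_ι_comm (n : ℕ) : ∀ x ∈ ⋀[ℂ]^n W, ∀ w : W,
    x * ι ℂ w = ((-1 : ℂ)^n) • (ι ℂ w * x) := by
  induction n with
  | zero =>
    intro x hx w
    have hx' : x ∈ P ^ 0 := hx
    rw [pow_zero] at hx'
    obtain ⟨r, rfl⟩ := Submodule.mem_one.mp hx'
    simp [Algebra.commutes]
  | succ n ih =>
    intro x hx w
    have hx' : x ∈ P * P ^ n := by rw [← pow_succ']; exact hx
    refine Submodule.mul_induction_on hx' ?_ ?_
    · rintro _ ⟨a, rfl⟩ z hz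
      have h1 : z * ι ℂ w = ((-1 : ℂ)^n) • (ι ℂ w * z) := ih z hz w
      calc ι ℂ a * z * ι ℂ w = ι ℂ a * (z * ι ℂ w) := by rw [mul_assoc]
        _ = ((-1 : ℂ)^n) • (ι ℂ a * (ι ℂ w * z)) := by rw [h1, mul_smul_comm]
        _ = ((-1 : ℂ)^n) • ((ι ℂ a * ι ℂ w) * z) := by rw [mul_assoc]
        _ = ((-1 : ℂ)^n) • ((-(ι ℂ w * ι ℂ a)) * z) := by rw [ι_anticomm]
        _ = ((-1 : ℂ)^(n+1)) • (ι ℂ w * (ι ℂ a * z)) := by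
              rw [neg_mul, smul_neg, pow_succ, mul_comm ((-1:ℂ)^n) (-1), ← smul_smul,
                mul_assoc]
              simp
    · intro a b ha hb
      rw [add_mul, ha, hb, mul_add, smul_add]

lemma ι_mul_mem3_mul_ι_self (u : W) (x : ExteriorAlgebra ℂ W) (hx : x ∈ ⋀[ℂ]^3 W) :
    ι ℂ u * x * ι ℂ u = 0 := by
  rw [mul_assoc, mul_ι_comm 3 x hx u]
  simp [← mul_assoc, ι_sq_zero]

/-- the skew-symmetry of the pairing `(u, w) ↦ ι u * x * ι w` for `x` of degree 3 -/
lemma ι_mul_mem3_mul_ι_skew (u w : W) (x : ExteriorAlgebra ℂ W) (hx : x ∈ ⋀[ℂ]^3 W) :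
    ι ℂ u * x * ι ℂ w = -(ι ℂ w * x * ι ℂ u) := by
  have h := ι_mul_mem3_mul_ι_self (u + w) x hx
  simp only [map_add, add_mul, mul_add, ι_mul_mem3_mul_ι_self u x hx,
    ι_mul_mem3_mul_ι_self w x hx, zero_add, add_zero] at h
  first
  | exact eq_neg_of_add_eq_zero_left h
  | exact eq_neg_of_add_eq_zero_right h

noncomputable def om (b : Module.Basis (Fin 5) ℂ W) (j : Fin 5) : ExteriorAlgebra ℂ W :=
  ιMulti ℂ 4 (b ∘ j.succAbove)

lemma ιMulti_basis_mem_span (b : Module.Basis (Fin 5) ℂ W) (σ : Fin 4 → Fin 5) :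
    ιMulti ℂ 4 (b ∘ σ) ∈ Submodule.span ℂ (Set.range (om b)) := by
  by_cases hσ : Function.Injective σ
  · set s : Finset (Fin 5) := Finset.image σ Finset.univ with hs
    have hcard : sᶜ.card = 1 := by
      rw [Finset.card_compl, Finset.card_image_of_injective _ hσ]
      simp
    obtain ⟨j, hj⟩ := Finset.card_eq_one.mp hcard
    have hrange : Set.range σ = Set.range (j.succAbove) := by
      rw [Fin.range_succAbove]
      have h1 : (Set.range σ) = ↑s := by simp [hs, Finset.coe_image]
      have h2 := congr_arg (fun t : Finset (Fin 5) => (↑t : Set (Fin 5))) hj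
      simp only [Finset.coe_compl, Finset.coe_singleton] at h2
      rw [h1, ← compl_compl (↑s : Set (Fin 5)), h2]
    have hinj : Function.Injective (j.succAbove) := Fin.succAbove_right_injective
    let π : Fin 4 ≃ Fin 4 :=
      (Equiv.ofInjective σ hσ).trans ((Equiv.setCongr hrange).trans
        (Equiv.ofInjective _ hinj).symm)
    have hcomp : (b ∘ σ) = (b ∘ j.succAbove) ∘ π := by
      funext i
      have h3 : j.succAbove (π i) = σ i := by
        simpa [π] using Equiv.apply_ofInjective_symm hinj
          (Equiv.setCongr hrange (Equiv.ofInjective σ hσ i))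
      simp [Function.comp, h3]
    rw [hcomp, AlternatingMap.map_perm]
    obtain h | h := Int.units_eq_one_or (Equiv.Perm.sign π)
    · rw [h, one_smul]; exact Submodule.subset_span ⟨j, rfl⟩
    · rw [h]
      have h4 : ((-1 : ℤˣ) • (ιMulti ℂ 4 (b ∘ j.succAbove)) : ExteriorAlgebra ℂ W)
          = -(ιMulti ℂ 4 (b ∘ j.succAbove)) := by
        simp [Units.smul_def]
      rw [h4]
      exact neg_mem (Submodule.subset_span ⟨j, rfl⟩)
  · obtain ⟨i, i', hvv, hne⟩ := Function.not_injective_iff.mp hσ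
    have h5 : (b ∘ σ) i = (b ∘ σ) i' := by simp [Function.comp, hvv]
    rw [AlternatingMap.map_eq_zero_of_eq _ _ h5 hne]
    exact Submodule.zero_mem _

lemma mem_span_om (b : Module.Basis (Fin 5) ℂ W) :
    ∀ y ∈ ⋀[ℂ]^4 W, y ∈ Submodule.span ℂ (Set.range (om b)) := by
  intro y hy
  rw [← ιMulti_span_fixedDegree] at hy
  refine Submodule.span_induction ?_ (Submodule.zero_mem _)
    (fun _ _ _ _ hx hx' => add_mem hx hx')
    (fun c x _ hx => Submodule.smul_mem _ c hx) hy
  rintro _ ⟨v, rfl⟩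
  have hexp : ιMulti ℂ 4 v
      = ∑ σ : Fin 4 → Fin 5, (∏ i, b.repr (v i) (σ i)) • ιMulti ℂ 4 (b ∘ σ) := by
    have h1 : v = fun i => ∑ j, (b.repr (v i) j) • b j := by
      funext i; exact (b.sum_repr (v i)).symm
    calc ιMulti ℂ 4 v
        = (ιMulti ℂ 4).toMultilinearMap (fun i => ∑ j, (b.repr (v i) j) • b j) := by
          rw [← h1]; rfl
      _ = ∑ σ : Fin 4 → Fin 5,
            (ιMulti ℂ 4).toMultilinearMap (fun i => (b.repr (v i) (σ i)) • b (σ i)) :=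
          (ιMulti ℂ 4).toMultilinearMap.map_sum (fun i j => (b.repr (v i) j) • b j)
      _ = ∑ σ : Fin 4 → Fin 5, (∏ i, b.repr (v i) (σ i)) • ιMulti ℂ 4 (b ∘ σ) := by
          refine Finset.sum_congr rfl fun σ _ => ?_
          exact (ιMulti ℂ 4).toMultilinearMap.map_smul_univ
            (fun i => b.repr (v i) (σ i)) (fun i => b (σ i))
  rw [hexp]
  exact Submodule.sum_mem _ fun σ _ => Submodule.smul_mem _ _ (ιMulti_basis_mem_span b σ)

end Wedge3Aux

namespace Wedge3Aux
variable {W : Type*} [AddCommGroup W] [Module ℂ W]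
local notation "P" => (LinearMap.range (ι ℂ : W →ₗ[ℂ] ExteriorAlgebra ℂ W))

noncomputable def phi (b : Module.Basis (Fin 5) ℂ W) :
    ExteriorAlgebra ℂ W →ₗ[ℂ] ExteriorAlgebra ℂ W :=
  cL (b.coord 4) ∘ₗ cL (b.coord 3) ∘ₗ cL (b.coord 2) ∘ₗ cL (b.coord 1) ∘ₗ cL (b.coord 0)

lemma phi_diagJ (b : Module.Basis (Fin 5) ℂ W) (j : Fin 5) (l : Fin 4 → Fin 5)
    (h1 : b ∘ Fin.succAbove j = ![b (l 0), b (l 1), b (l 2), b (l 3)])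
    (h2 : phi b (ι ℂ (b j) * (ι ℂ (b (l 0)) * (ι ℂ (b (l 1)) * (ι ℂ (b (l 2)) *
      ι ℂ (b (l 3)))))) = algebraMap ℂ _ ((-1 : ℂ)^(j : ℕ))) :
    phi b (ι ℂ (b j) * om b j) = algebraMap ℂ _ ((-1 : ℂ)^(j : ℕ)) := by
  rw [om, h1, ιMulti_apply]
  simp only [List.ofFn_succ, List.ofFn_zero, List.prod_cons, List.prod_nil,
    Matrix.cons_val_zero, Matrix.cons_val_one, Matrix.head_cons, Fin.isValue, mul_one]
  convert h2 using 5 <;> norm_num [Matrix.cons_val_fin_one] <;> rfl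

lemma phi_diag (b : Module.Basis (Fin 5) ℂ W) (j : Fin 5) :
    phi b (ι ℂ (b j) * om b j) = algebraMap ℂ _ ((-1 : ℂ)^(j : ℕ)) := by
  fin_cases j
  · exact phi_diagJ b 0 ![1,2,3,4] (by funext i; fin_cases i <;> rfl) (by
      simp [phi, cL_ι_mul, cL_ι, Module.Basis.coord_apply, Module.Basis.repr_self_apply,
        Algebra.algebraMap_eq_smul_one, smul_smul])
  · exact phi_diagJ b 1 ![0,2,3,4] (by funext i; fin_cases i <;> rfl) (by
      simp [phi, cL_ι_mul, cL_ι, Module.Basis.coord_apply, Module.Basis.repr_self_apply,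
        Algebra.algebraMap_eq_smul_one, smul_smul])
  · exact phi_diagJ b 2 ![0,1,3,4] (by funext i; fin_cases i <;> rfl) (by
      simp [phi, cL_ι_mul, cL_ι, Module.Basis.coord_apply, Module.Basis.repr_self_apply,
        Algebra.algebraMap_eq_smul_one, smul_smul])
  · exact phi_diagJ b 3 ![0,1,2,4] (by funext i; fin_cases i <;> rfl) (by
      simp [phi, cL_ι_mul, cL_ι, Module.Basis.coord_apply, Module.Basis.repr_self_apply,
        Algebra.algebraMap_eq_smul_one, smul_smul]
      norm_num)
  · exact phi_diagJ b 4 ![0,1,2,3] (by funext i; fin_cases i <;> rfl) (by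
      simp [phi, cL_ι_mul, cL_ι, Module.Basis.coord_apply, Module.Basis.repr_self_apply,
        Algebra.algebraMap_eq_smul_one, smul_smul]
      norm_num)

lemma ι_mul_om_eq_zero (b : Module.Basis (Fin 5) ℂ W) {k j : Fin 5} (h : k ≠ j) :
    ι ℂ (b k) * om b j = 0 := by
  obtain ⟨i0, hi0⟩ := Fin.exists_succAbove_eq h
  have hu : ι ℂ (b k) * om b j = ιMulti ℂ 5 (Fin.cons (b k) (b ∘ j.succAbove)) := by
    simp only [om, ιMulti_apply, List.ofFn_succ, List.ofFn_zero, List.prod_cons,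
      List.prod_nil, Fin.cons_zero, Fin.cons_succ, mul_one, Function.comp]
  rw [hu]
  refine AlternatingMap.map_eq_zero_of_eq _ _ (i := i0.succ) (j := 0) ?_ (Fin.succ_ne_zero i0)
  simp [Fin.cons_succ, Fin.cons_zero, hi0]

lemma eq_zero_of_phi_eq_zero (b : Module.Basis (Fin 5) ℂ W) (y : ExteriorAlgebra ℂ W)
    (hy : y ∈ ⋀[ℂ]^4 W) (h : ∀ k : Fin 5, phi b (ι ℂ (b k) * y) = 0) : y = 0 := by
  obtain ⟨t, rfl⟩ := (Submodule.mem_span_range_iff_exists_fun ℂ).mp (mem_span_om b y hy)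
  have ht : ∀ k, t k = 0 := by
    intro k
    have h1 : phi b (ι ℂ (b k) * ∑ j, t j • om b j)
        = t k • algebraMap ℂ _ ((-1:ℂ)^(k:ℕ)) := by
      rw [Finset.mul_sum]
      simp only [mul_smul_comm, map_sum, map_smul]
      rw [Finset.sum_eq_single k]
      · rw [phi_diag]
      · intro j _ hjk
        rw [ι_mul_om_eq_zero b (Ne.symm hjk), map_zero, smul_zero]
      · intro hk; exact absurd (Finset.mem_univ k) hk
    rw [h k] at h1
    have h2 := congr_arg (algebraMapInv : ExteriorAlgebra ℂ W →ₐ[ℂ] ℂ) h1.symm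
    rw [map_smul, map_zero] at h2
    rw [ExteriorAlgebra.algebraMap_leftInverse W ((-1:ℂ)^(k:ℕ))] at h2
    have h3 : t k * (-1:ℂ)^(k:ℕ) = 0 := by simpa [smul_eq_mul] using h2
    rcases mul_eq_zero.mp h3 with h4 | h4
    · exact h4
    · exact absurd h4 (pow_ne_zero _ (by norm_num))
  simp [ht]

end Wedge3Aux

namespace Wedge3Aux
variable {W : Type*} [AddCommGroup W] [Module ℂ W]
local notation "P" => (LinearMap.range (ι ℂ : W →ₗ[ℂ] ExteriorAlgebra ℂ W))

lemma main (b : Module.Basis (Fin 5) ℂ W) (A : ExteriorAlgebra ℂ W)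
    (hA3 : A ∈ ⋀[ℂ]^3 W) :
    ∃ v : W, v ≠ 0 ∧ ∃ B ∈ ⋀[ℂ]^2 W, A = ι ℂ v * B := by
  classical
  have hmem4 : ∀ w : W, A * ι ℂ w ∈ ⋀[ℂ]^4 W := by
    intro w
    have h2 := Submodule.mul_mem_mul hA3 (LinearMap.mem_range_self (ι ℂ) w)
    rw [← pow_succ] at h2; exact h2
  have hmem5 : ∀ u w : W, ι ℂ u * A * ι ℂ w ∈ ⋀[ℂ]^5 W := by
    intro u w
    have h1 : ι ℂ u * A ∈ ⋀[ℂ]^4 W := by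
      have h := Submodule.mul_mem_mul (LinearMap.mem_range_self (ι ℂ) u) hA3
      rw [← pow_succ'] at h; exact h
    have h2 := Submodule.mul_mem_mul h1 (LinearMap.mem_range_self (ι ℂ) w)
    rw [← pow_succ] at h2; exact h2
  have hphi0 : ∀ x, x ∈ ⋀[ℂ]^5 W → phi b x ∈ (⋀[ℂ]^0 W) :=
    fun x hx =>
      cL_mem 0 _ _ (cL_mem 1 _ _ (cL_mem 2 _ _ (cL_mem 3 _ _ (cL_mem 4 _ _ hx))))
  have hval : ∀ x, x ∈ ⋀[ℂ]^5 W →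
      phi b x = algebraMap ℂ _ (algebraMapInv (phi b x) : ℂ) := by
    intro x hx
    have h0 : phi b x ∈ P ^ 0 := hphi0 x hx
    rw [pow_zero] at h0
    obtain ⟨r, hr⟩ := Submodule.mem_one.mp h0
    rw [← hr, ExteriorAlgebra.algebraMap_leftInverse W r]
  set M : Matrix (Fin 5) (Fin 5) ℂ :=
    fun i j => algebraMapInv (phi b (ι ℂ (b i) * A * ι ℂ (b j))) with hM
  have hskew : ∀ i j, M j i = - M i j := by
    intro i j
    rw [hM]
    simp only
    rw [ι_mul_mem3_mul_ι_skew (b j) (b i) A hA3, map_neg, map_neg]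
  have hdet : M.det = 0 := by
    have hT : M.transpose = -M := by
      ext i j
      rw [Matrix.transpose_apply, Matrix.neg_apply, hskew]
    have h1 : M.det = -M.det := by
      conv_lhs => rw [← Matrix.det_transpose, hT, Matrix.det_neg]
      norm_num
    linear_combination h1 / 2
  obtain ⟨c, hc0, hcM⟩ := (Matrix.exists_mulVec_eq_zero_iff).mpr hdet
  set v : W := b.equivFun.symm c with hv
  have hvne : v ≠ 0 := by
    intro h
    apply hc0
    have h8 : b.equivFun (b.equivFun.symm c) = b.equivFun 0 := congr_arg _ h
    rw [LinearEquiv.apply_symm_apply, map_zero] at h8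
    exact h8
  have hιv : ι ℂ v = ∑ j, c j • ι ℂ (b j) := by
    rw [hv, Module.Basis.equivFun_symm_apply, map_sum]
    simp
  have hcon : ∀ i, phi b (ι ℂ (b i) * (A * ι ℂ v)) = 0 := by
    intro i
    have h1 : ι ℂ (b i) * (A * ι ℂ v) = ∑ j, c j • (ι ℂ (b i) * A * ι ℂ (b j)) := by
      rw [hιv, Finset.mul_sum, Finset.mul_sum]
      refine Finset.sum_congr rfl fun j _ => ?_
      rw [mul_smul_comm, mul_smul_comm, mul_assoc]
    have h2 : ∀ j, phi b (c j • (ι ℂ (b i) * A * ι ℂ (b j)))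
        = algebraMap ℂ (ExteriorAlgebra ℂ W) (M i j * c j) := by
      intro j
      rw [map_smul, hval _ (hmem5 (b i) (b j)), Algebra.smul_def, ← map_mul,
        mul_comm (c j)]
    have h3 : ∑ j, M i j * c j = 0 := by
      have h4 := congr_fun hcM i
      simpa [Matrix.mulVec, dotProduct] using h4
    rw [h1, map_sum, Finset.sum_congr rfl fun j _ => h2 j, ← map_sum, h3, map_zero]
  have hy0 : A * ι ℂ v = 0 :=
    eq_zero_of_phi_eq_zero b _ (hmem4 v) (fun k => hcon k)
  have hvA : ι ℂ v * A = 0 := by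
    have h := mul_ι_comm 3 A hA3 v
    rw [hy0] at h
    have h5 : ((-1:ℂ)^3) • (ι ℂ v * A) = 0 := h.symm
    rcases smul_eq_zero.mp h5 with h6 | h6
    · exact absurd h6 (by norm_num)
    · exact h6
  obtain ⟨i, hi⟩ : ∃ i, b.repr v i ≠ 0 := by
    by_contra h
    push_neg at h
    refine hvne ?_
    have h7 : b.repr v = 0 := Finsupp.ext fun j => by simpa using h j
    have h9 : b.repr.symm (b.repr v) = b.repr.symm 0 := congr_arg _ h7
    rw [LinearEquiv.symm_apply_apply, map_zero] at h9
    exact h9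
  set f : Module.Dual ℂ W := (b.repr v i)⁻¹ • b.coord i with hf
  have hfv : f v = 1 := by
    rw [hf]
    simp [Module.Basis.coord_apply, inv_mul_cancel₀ hi]
  have hkey := cL_ι_mul f v A
  rw [hvA, map_zero, hfv, one_smul] at hkey
  exact ⟨v, hvne, cL f A, cL_mem 2 f A hA3, sub_eq_zero.mp hkey.symm⟩

end Wedge3Aux

open ExteriorAlgebra

/-- every nonzero element of `⋀³W`, for `W` a 5-dimensional complex vector
space, is divisible by a nonzero vector: `α = v ∧ β` with `0 ≠ v ∈ W` and `β ∈ ⋀²W`. -/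
theorem exists_divisor_of_wedge3 (W : Type*) [AddCommGroup W] [Module ℂ W]
    [FiniteDimensional ℂ W] (hdim : Module.finrank ℂ W = 5)
    (α : ⋀[ℂ]^3 W) (hα : α ≠ 0) :
    ∃ v : W, v ≠ 0 ∧ ∃ β : ⋀[ℂ]^2 W,
      (α : ExteriorAlgebra ℂ W) = ι ℂ v * (β : ExteriorAlgebra ℂ W) := by
  classical
  let b : Module.Basis (Fin 5) ℂ W := Module.finBasisOfFinrankEq ℂ W hdim
  obtain ⟨v, hv, B, hB, hAB⟩ := Wedge3Aux.main b (α : ExteriorAlgebra ℂ W) α.2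
  exact ⟨v, hv, ⟨B, hB⟩, hAB⟩
end

section
/- The discriminant group A_L = L^∨/L of the lattice L := ℤu ⊕ Λ is isomorphic to (ℤ/2ℤ)³; more precisely, u/2, e₁/2 and e₂/2 lie in L^∨, their classes each have order 2 in L^∨/L, and L^∨ = L + ℤ(u/2) + ℤ(e₁/2) + ℤ(e₂/2), so these three classes form a basis of A_L as an 𝔽₂-vector space (in particular |A_L| = 8). -/
/-- Index type for a basis of the lattice `Λ̃ = U³ ⊕ (−E₈)² ⊕ (−2)`:
three hyperbolic planes, two copies of `−E₈`, and one rank-1 piece. -/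
abbrev LamIdx : Type := (Fin 3 × Fin 2) ⊕ ((Fin 2 × Fin 8) ⊕ Fin 1)

/-- The standard Gram matrix of the `E₈` lattice. -/
def E8mat : Matrix (Fin 8) (Fin 8) ℤ :=
  !![2, -1, 0, 0, 0, 0, 0, 0;
     -1, 2, -1, 0, 0, 0, 0, 0;
     0, -1, 2, -1, 0, 0, 0, 0;
     0, 0, -1, 2, -1, 0, 0, 0;
     0, 0, 0, -1, 2, -1, 0, -1;
     0, 0, 0, 0, -1, 2, -1, 0;
     0, 0, 0, 0, 0, -1, 2, 0;
     0, 0, 0, 0, -1, 0, 0, 2]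

/-- The Gram matrix of `Λ̃ = U³ ⊕ (−E₈)² ⊕ (−2)`: block diagonal with three hyperbolic
blocks, two `−E₈` blocks and one `(−2)` block. -/
def gram : Matrix LamIdx LamIdx ℤ := fun i j =>
  match i, j with
  | .inl (a, i), .inl (b, j) => if a = b then (if i = j then 0 else 1) else 0
  | .inr (.inl (a, i)), .inr (.inl (b, j)) => if a = b then -E8mat i j else 0
  | .inr (.inr _), .inr (.inr _) => -2
  | _, _ => 0

/-- The bilinear form `(·,·)` of the lattice `Λ̃`. -/
noncomputable def B : (LamIdx → ℤ) →ₗ[ℤ] (LamIdx → ℤ) →ₗ[ℤ] ℤ :=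
  Matrix.toLinearMap₂' ℤ gram

/-- The vector `u`, of square `2`, in the first hyperbolic summand. -/
def uu : LamIdx → ℤ := fun i =>
  if i = Sum.inl (0, 0) then 1 else if i = Sum.inl (0, 1) then 1 else 0

/-- The vector `e₁`, a generator of `u^⊥ ∩ U` in the first hyperbolic summand. -/
def ee1 : LamIdx → ℤ := fun i =>
  if i = Sum.inl (0, 0) then 1 else if i = Sum.inl (0, 1) then -1 else 0

/-- The vector `e₂`, a generator of the `(−2)` summand. -/
def ee2 : LamIdx → ℤ := fun i =>
  if i = Sum.inr (Sum.inr 0) then 1 else 0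

/-- The lattice `Λ = u^⊥ ⊆ Λ̃`. -/
noncomputable def Lam : Submodule ℤ (LamIdx → ℤ) := LinearMap.ker (B.flip uu)

/-- The sublattice `L = ℤu + u^⊥ = ℤu ⊕ Λ` of `Λ̃`. -/
noncomputable def LL : Submodule ℤ (LamIdx → ℤ) := Submodule.span ℤ {uu} ⊔ Lam

/-- The inclusion of `Λ̃` into `Λ̃ ⊗ ℚ`. -/
def toQlin : (LamIdx → ℤ) →ₗ[ℤ] (LamIdx → ℚ) where
  toFun x := fun i => (x i : ℚ)
  map_add' x y := by funext i; push_cast; simp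
  map_smul' c x := by funext i; push_cast; simp

/-- The Gram matrix of `Λ̃`, over `ℚ`. -/
def gramQ : Matrix LamIdx LamIdx ℚ := fun i j => (gram i j : ℚ)

/-- The `ℚ`-bilinear extension of the form of `Λ̃` to `Λ̃ ⊗ ℚ`. -/
noncomputable def Bq : (LamIdx → ℚ) →ₗ[ℚ] (LamIdx → ℚ) →ₗ[ℚ] ℚ :=
  Matrix.toLinearMap₂' ℚ gramQ

/-- The image of `L` in `Λ̃ ⊗ ℚ`. -/
noncomputable def Lmap : Submodule ℤ (LamIdx → ℚ) := Submodule.map toQlin LL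

/-- The dual lattice `L^∨ = {x ∈ L ⊗ ℚ : (x,y) ∈ ℤ for all y ∈ L}`. -/
noncomputable def Ldual : Submodule ℤ (LamIdx → ℚ) where
  carrier := {x | ∀ y ∈ LL, ∃ n : ℤ, Bq x (toQlin y) = n}
  add_mem' := by
    rintro a b ha hb y hy
    obtain ⟨n, hn⟩ := ha y hy
    obtain ⟨m, hm⟩ := hb y hy
    exact ⟨n + m, by rw [map_add, LinearMap.add_apply, hn, hm]; push_cast; ring⟩
  zero_mem' := fun y hy => ⟨0, by simp⟩
  smul_mem' := by
    intro c x hx y hy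
    obtain ⟨n, hn⟩ := hx y hy
    refine ⟨c * n, ?_⟩
    have h1 : Bq (c • x) = c • Bq x := map_zsmul Bq c x
    rw [h1, LinearMap.smul_apply, hn]
    push_cast
    simp


lemma E8v00 : E8mat 0 0 = (2) := rfl
lemma E8v01 : E8mat 0 1 = (-1) := rfl
lemma E8v02 : E8mat 0 2 = (0) := rfl
lemma E8v03 : E8mat 0 3 = (0) := rfl
lemma E8v04 : E8mat 0 4 = (0) := rfl
lemma E8v05 : E8mat 0 5 = (0) := rfl
lemma E8v06 : E8mat 0 6 = (0) := rfl
lemma E8v07 : E8mat 0 7 = (0) := rfl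
lemma E8v10 : E8mat 1 0 = (-1) := rfl
lemma E8v11 : E8mat 1 1 = (2) := rfl
lemma E8v12 : E8mat 1 2 = (-1) := rfl
lemma E8v13 : E8mat 1 3 = (0) := rfl
lemma E8v14 : E8mat 1 4 = (0) := rfl
lemma E8v15 : E8mat 1 5 = (0) := rfl
lemma E8v16 : E8mat 1 6 = (0) := rfl
lemma E8v17 : E8mat 1 7 = (0) := rfl
lemma E8v20 : E8mat 2 0 = (0) := rfl
lemma E8v21 : E8mat 2 1 = (-1) := rfl
lemma E8v22 : E8mat 2 2 = (2) := rfl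
lemma E8v23 : E8mat 2 3 = (-1) := rfl
lemma E8v24 : E8mat 2 4 = (0) := rfl
lemma E8v25 : E8mat 2 5 = (0) := rfl
lemma E8v26 : E8mat 2 6 = (0) := rfl
lemma E8v27 : E8mat 2 7 = (0) := rfl
lemma E8v30 : E8mat 3 0 = (0) := rfl
lemma E8v31 : E8mat 3 1 = (0) := rfl
lemma E8v32 : E8mat 3 2 = (-1) := rfl
lemma E8v33 : E8mat 3 3 = (2) := rfl
lemma E8v34 : E8mat 3 4 = (-1) := rfl
lemma E8v35 : E8mat 3 5 = (0) := rfl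
lemma E8v36 : E8mat 3 6 = (0) := rfl
lemma E8v37 : E8mat 3 7 = (0) := rfl
lemma E8v40 : E8mat 4 0 = (0) := rfl
lemma E8v41 : E8mat 4 1 = (0) := rfl
lemma E8v42 : E8mat 4 2 = (0) := rfl
lemma E8v43 : E8mat 4 3 = (-1) := rfl
lemma E8v44 : E8mat 4 4 = (2) := rfl
lemma E8v45 : E8mat 4 5 = (-1) := rfl
lemma E8v46 : E8mat 4 6 = (0) := rfl
lemma E8v47 : E8mat 4 7 = (-1) := rfl
lemma E8v50 : E8mat 5 0 = (0) := rfl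
lemma E8v51 : E8mat 5 1 = (0) := rfl
lemma E8v52 : E8mat 5 2 = (0) := rfl
lemma E8v53 : E8mat 5 3 = (0) := rfl
lemma E8v54 : E8mat 5 4 = (-1) := rfl
lemma E8v55 : E8mat 5 5 = (2) := rfl
lemma E8v56 : E8mat 5 6 = (-1) := rfl
lemma E8v57 : E8mat 5 7 = (0) := rfl
lemma E8v60 : E8mat 6 0 = (0) := rfl
lemma E8v61 : E8mat 6 1 = (0) := rfl
lemma E8v62 : E8mat 6 2 = (0) := rfl
lemma E8v63 : E8mat 6 3 = (0) := rfl
lemma E8v64 : E8mat 6 4 = (0) := rfl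
lemma E8v65 : E8mat 6 5 = (-1) := rfl
lemma E8v66 : E8mat 6 6 = (2) := rfl
lemma E8v67 : E8mat 6 7 = (0) := rfl
lemma E8v70 : E8mat 7 0 = (0) := rfl
lemma E8v71 : E8mat 7 1 = (0) := rfl
lemma E8v72 : E8mat 7 2 = (0) := rfl
lemma E8v73 : E8mat 7 3 = (0) := rfl
lemma E8v74 : E8mat 7 4 = (-1) := rfl
lemma E8v75 : E8mat 7 5 = (0) := rfl
lemma E8v76 : E8mat 7 6 = (0) := rfl
lemma E8v77 : E8mat 7 7 = (2) := rfl
set_option maxHeartbeats 4000000 in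
lemma Bq_expand (x y : LamIdx → ℚ) : Bq x y =
    x (Sum.inl 0 : LamIdx) * y (Sum.inl (0,1) : LamIdx) +
    x (Sum.inl (0,1) : LamIdx) * y (Sum.inl 0 : LamIdx) +
    x (Sum.inl (1,0) : LamIdx) * y (Sum.inl 1 : LamIdx) +
    x (Sum.inl 1 : LamIdx) * y (Sum.inl (1,0) : LamIdx) +
    x (Sum.inl (2,0) : LamIdx) * y (Sum.inl (2,1) : LamIdx) +
    x (Sum.inl (2,1) : LamIdx) * y (Sum.inl (2,0) : LamIdx) +
    (-2) * x (Sum.inr (Sum.inl 0) : LamIdx) * y (Sum.inr (Sum.inl 0) : LamIdx) +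
    (1) * x (Sum.inr (Sum.inl 0) : LamIdx) * y (Sum.inr (Sum.inl (0,1)) : LamIdx) +
    (1) * x (Sum.inr (Sum.inl (0,1)) : LamIdx) * y (Sum.inr (Sum.inl 0) : LamIdx) +
    (-2) * x (Sum.inr (Sum.inl (0,1)) : LamIdx) * y (Sum.inr (Sum.inl (0,1)) : LamIdx) +
    (1) * x (Sum.inr (Sum.inl (0,1)) : LamIdx) * y (Sum.inr (Sum.inl (0,2)) : LamIdx) +
    (1) * x (Sum.inr (Sum.inl (0,2)) : LamIdx) * y (Sum.inr (Sum.inl (0,1)) : LamIdx) +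
    (-2) * x (Sum.inr (Sum.inl (0,2)) : LamIdx) * y (Sum.inr (Sum.inl (0,2)) : LamIdx) +
    (1) * x (Sum.inr (Sum.inl (0,2)) : LamIdx) * y (Sum.inr (Sum.inl (0,3)) : LamIdx) +
    (1) * x (Sum.inr (Sum.inl (0,3)) : LamIdx) * y (Sum.inr (Sum.inl (0,2)) : LamIdx) +
    (-2) * x (Sum.inr (Sum.inl (0,3)) : LamIdx) * y (Sum.inr (Sum.inl (0,3)) : LamIdx) +
    (1) * x (Sum.inr (Sum.inl (0,3)) : LamIdx) * y (Sum.inr (Sum.inl (0,4)) : LamIdx) +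
    (1) * x (Sum.inr (Sum.inl (0,4)) : LamIdx) * y (Sum.inr (Sum.inl (0,3)) : LamIdx) +
    (-2) * x (Sum.inr (Sum.inl (0,4)) : LamIdx) * y (Sum.inr (Sum.inl (0,4)) : LamIdx) +
    (1) * x (Sum.inr (Sum.inl (0,4)) : LamIdx) * y (Sum.inr (Sum.inl (0,5)) : LamIdx) +
    (1) * x (Sum.inr (Sum.inl (0,4)) : LamIdx) * y (Sum.inr (Sum.inl (0,7)) : LamIdx) +
    (1) * x (Sum.inr (Sum.inl (0,5)) : LamIdx) * y (Sum.inr (Sum.inl (0,4)) : LamIdx) +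
    (-2) * x (Sum.inr (Sum.inl (0,5)) : LamIdx) * y (Sum.inr (Sum.inl (0,5)) : LamIdx) +
    (1) * x (Sum.inr (Sum.inl (0,5)) : LamIdx) * y (Sum.inr (Sum.inl (0,6)) : LamIdx) +
    (1) * x (Sum.inr (Sum.inl (0,6)) : LamIdx) * y (Sum.inr (Sum.inl (0,5)) : LamIdx) +
    (-2) * x (Sum.inr (Sum.inl (0,6)) : LamIdx) * y (Sum.inr (Sum.inl (0,6)) : LamIdx) +
    (1) * x (Sum.inr (Sum.inl (0,7)) : LamIdx) * y (Sum.inr (Sum.inl (0,4)) : LamIdx) +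
    (-2) * x (Sum.inr (Sum.inl (0,7)) : LamIdx) * y (Sum.inr (Sum.inl (0,7)) : LamIdx) +
    (-2) * x (Sum.inr (Sum.inl (1,0)) : LamIdx) * y (Sum.inr (Sum.inl (1,0)) : LamIdx) +
    (1) * x (Sum.inr (Sum.inl (1,0)) : LamIdx) * y (Sum.inr (Sum.inl 1) : LamIdx) +
    (1) * x (Sum.inr (Sum.inl 1) : LamIdx) * y (Sum.inr (Sum.inl (1,0)) : LamIdx) +
    (-2) * x (Sum.inr (Sum.inl 1) : LamIdx) * y (Sum.inr (Sum.inl 1) : LamIdx) +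
    (1) * x (Sum.inr (Sum.inl 1) : LamIdx) * y (Sum.inr (Sum.inl (1,2)) : LamIdx) +
    (1) * x (Sum.inr (Sum.inl (1,2)) : LamIdx) * y (Sum.inr (Sum.inl 1) : LamIdx) +
    (-2) * x (Sum.inr (Sum.inl (1,2)) : LamIdx) * y (Sum.inr (Sum.inl (1,2)) : LamIdx) +
    (1) * x (Sum.inr (Sum.inl (1,2)) : LamIdx) * y (Sum.inr (Sum.inl (1,3)) : LamIdx) +
    (1) * x (Sum.inr (Sum.inl (1,3)) : LamIdx) * y (Sum.inr (Sum.inl (1,2)) : LamIdx) +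
    (-2) * x (Sum.inr (Sum.inl (1,3)) : LamIdx) * y (Sum.inr (Sum.inl (1,3)) : LamIdx) +
    (1) * x (Sum.inr (Sum.inl (1,3)) : LamIdx) * y (Sum.inr (Sum.inl (1,4)) : LamIdx) +
    (1) * x (Sum.inr (Sum.inl (1,4)) : LamIdx) * y (Sum.inr (Sum.inl (1,3)) : LamIdx) +
    (-2) * x (Sum.inr (Sum.inl (1,4)) : LamIdx) * y (Sum.inr (Sum.inl (1,4)) : LamIdx) +
    (1) * x (Sum.inr (Sum.inl (1,4)) : LamIdx) * y (Sum.inr (Sum.inl (1,5)) : LamIdx) +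
    (1) * x (Sum.inr (Sum.inl (1,4)) : LamIdx) * y (Sum.inr (Sum.inl (1,7)) : LamIdx) +
    (1) * x (Sum.inr (Sum.inl (1,5)) : LamIdx) * y (Sum.inr (Sum.inl (1,4)) : LamIdx) +
    (-2) * x (Sum.inr (Sum.inl (1,5)) : LamIdx) * y (Sum.inr (Sum.inl (1,5)) : LamIdx) +
    (1) * x (Sum.inr (Sum.inl (1,5)) : LamIdx) * y (Sum.inr (Sum.inl (1,6)) : LamIdx) +
    (1) * x (Sum.inr (Sum.inl (1,6)) : LamIdx) * y (Sum.inr (Sum.inl (1,5)) : LamIdx) +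
    (-2) * x (Sum.inr (Sum.inl (1,6)) : LamIdx) * y (Sum.inr (Sum.inl (1,6)) : LamIdx) +
    (1) * x (Sum.inr (Sum.inl (1,7)) : LamIdx) * y (Sum.inr (Sum.inl (1,4)) : LamIdx) +
    (-2) * x (Sum.inr (Sum.inl (1,7)) : LamIdx) * y (Sum.inr (Sum.inl (1,7)) : LamIdx) +
    (-2) * x (Sum.inr (Sum.inr 0) : LamIdx) * y (Sum.inr (Sum.inr 0) : LamIdx) := by
  simp [Bq, Matrix.toLinearMap₂'_apply, gramQ, gram, Fintype.sum_sum_type, Fintype.sum_prod_type, Fin.sum_univ_two, Fin.sum_univ_three, Fin.sum_univ_eight, Fin.sum_univ_one,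
    E8v00, E8v01, E8v02, E8v03, E8v04, E8v05, E8v06, E8v07, E8v10, E8v11, E8v12, E8v13, E8v14, E8v15, E8v16, E8v17, E8v20, E8v21, E8v22, E8v23, E8v24, E8v25, E8v26, E8v27, E8v30, E8v31, E8v32, E8v33, E8v34, E8v35, E8v36, E8v37, E8v40, E8v41, E8v42, E8v43, E8v44, E8v45, E8v46, E8v47, E8v50, E8v51, E8v52, E8v53, E8v54, E8v55, E8v56, E8v57, E8v60, E8v61, E8v62, E8v63, E8v64, E8v65, E8v66, E8v67, E8v70, E8v71, E8v72, E8v73, E8v74, E8v75, E8v76, E8v77]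
  simp only [← Prod.mk_zero_zero, ← Prod.mk_one_one]
  ring

set_option maxHeartbeats 4000000 in
lemma B_expand (x y : LamIdx → ℤ) : B x y =
    x (Sum.inl 0 : LamIdx) * y (Sum.inl (0,1) : LamIdx) +
    x (Sum.inl (0,1) : LamIdx) * y (Sum.inl 0 : LamIdx) +
    x (Sum.inl (1,0) : LamIdx) * y (Sum.inl 1 : LamIdx) +
    x (Sum.inl 1 : LamIdx) * y (Sum.inl (1,0) : LamIdx) +
    x (Sum.inl (2,0) : LamIdx) * y (Sum.inl (2,1) : LamIdx) +
    x (Sum.inl (2,1) : LamIdx) * y (Sum.inl (2,0) : LamIdx) +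
    (-2) * x (Sum.inr (Sum.inl 0) : LamIdx) * y (Sum.inr (Sum.inl 0) : LamIdx) +
    (1) * x (Sum.inr (Sum.inl 0) : LamIdx) * y (Sum.inr (Sum.inl (0,1)) : LamIdx) +
    (1) * x (Sum.inr (Sum.inl (0,1)) : LamIdx) * y (Sum.inr (Sum.inl 0) : LamIdx) +
    (-2) * x (Sum.inr (Sum.inl (0,1)) : LamIdx) * y (Sum.inr (Sum.inl (0,1)) : LamIdx) +
    (1) * x (Sum.inr (Sum.inl (0,1)) : LamIdx) * y (Sum.inr (Sum.inl (0,2)) : LamIdx) +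
    (1) * x (Sum.inr (Sum.inl (0,2)) : LamIdx) * y (Sum.inr (Sum.inl (0,1)) : LamIdx) +
    (-2) * x (Sum.inr (Sum.inl (0,2)) : LamIdx) * y (Sum.inr (Sum.inl (0,2)) : LamIdx) +
    (1) * x (Sum.inr (Sum.inl (0,2)) : LamIdx) * y (Sum.inr (Sum.inl (0,3)) : LamIdx) +
    (1) * x (Sum.inr (Sum.inl (0,3)) : LamIdx) * y (Sum.inr (Sum.inl (0,2)) : LamIdx) +
    (-2) * x (Sum.inr (Sum.inl (0,3)) : LamIdx) * y (Sum.inr (Sum.inl (0,3)) : LamIdx) +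
    (1) * x (Sum.inr (Sum.inl (0,3)) : LamIdx) * y (Sum.inr (Sum.inl (0,4)) : LamIdx) +
    (1) * x (Sum.inr (Sum.inl (0,4)) : LamIdx) * y (Sum.inr (Sum.inl (0,3)) : LamIdx) +
    (-2) * x (Sum.inr (Sum.inl (0,4)) : LamIdx) * y (Sum.inr (Sum.inl (0,4)) : LamIdx) +
    (1) * x (Sum.inr (Sum.inl (0,4)) : LamIdx) * y (Sum.inr (Sum.inl (0,5)) : LamIdx) +
    (1) * x (Sum.inr (Sum.inl (0,4)) : LamIdx) * y (Sum.inr (Sum.inl (0,7)) : LamIdx) +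
    (1) * x (Sum.inr (Sum.inl (0,5)) : LamIdx) * y (Sum.inr (Sum.inl (0,4)) : LamIdx) +
    (-2) * x (Sum.inr (Sum.inl (0,5)) : LamIdx) * y (Sum.inr (Sum.inl (0,5)) : LamIdx) +
    (1) * x (Sum.inr (Sum.inl (0,5)) : LamIdx) * y (Sum.inr (Sum.inl (0,6)) : LamIdx) +
    (1) * x (Sum.inr (Sum.inl (0,6)) : LamIdx) * y (Sum.inr (Sum.inl (0,5)) : LamIdx) +
    (-2) * x (Sum.inr (Sum.inl (0,6)) : LamIdx) * y (Sum.inr (Sum.inl (0,6)) : LamIdx) +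
    (1) * x (Sum.inr (Sum.inl (0,7)) : LamIdx) * y (Sum.inr (Sum.inl (0,4)) : LamIdx) +
    (-2) * x (Sum.inr (Sum.inl (0,7)) : LamIdx) * y (Sum.inr (Sum.inl (0,7)) : LamIdx) +
    (-2) * x (Sum.inr (Sum.inl (1,0)) : LamIdx) * y (Sum.inr (Sum.inl (1,0)) : LamIdx) +
    (1) * x (Sum.inr (Sum.inl (1,0)) : LamIdx) * y (Sum.inr (Sum.inl 1) : LamIdx) +
    (1) * x (Sum.inr (Sum.inl 1) : LamIdx) * y (Sum.inr (Sum.inl (1,0)) : LamIdx) +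
    (-2) * x (Sum.inr (Sum.inl 1) : LamIdx) * y (Sum.inr (Sum.inl 1) : LamIdx) +
    (1) * x (Sum.inr (Sum.inl 1) : LamIdx) * y (Sum.inr (Sum.inl (1,2)) : LamIdx) +
    (1) * x (Sum.inr (Sum.inl (1,2)) : LamIdx) * y (Sum.inr (Sum.inl 1) : LamIdx) +
    (-2) * x (Sum.inr (Sum.inl (1,2)) : LamIdx) * y (Sum.inr (Sum.inl (1,2)) : LamIdx) +
    (1) * x (Sum.inr (Sum.inl (1,2)) : LamIdx) * y (Sum.inr (Sum.inl (1,3)) : LamIdx) +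
    (1) * x (Sum.inr (Sum.inl (1,3)) : LamIdx) * y (Sum.inr (Sum.inl (1,2)) : LamIdx) +
    (-2) * x (Sum.inr (Sum.inl (1,3)) : LamIdx) * y (Sum.inr (Sum.inl (1,3)) : LamIdx) +
    (1) * x (Sum.inr (Sum.inl (1,3)) : LamIdx) * y (Sum.inr (Sum.inl (1,4)) : LamIdx) +
    (1) * x (Sum.inr (Sum.inl (1,4)) : LamIdx) * y (Sum.inr (Sum.inl (1,3)) : LamIdx) +
    (-2) * x (Sum.inr (Sum.inl (1,4)) : LamIdx) * y (Sum.inr (Sum.inl (1,4)) : LamIdx) +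
    (1) * x (Sum.inr (Sum.inl (1,4)) : LamIdx) * y (Sum.inr (Sum.inl (1,5)) : LamIdx) +
    (1) * x (Sum.inr (Sum.inl (1,4)) : LamIdx) * y (Sum.inr (Sum.inl (1,7)) : LamIdx) +
    (1) * x (Sum.inr (Sum.inl (1,5)) : LamIdx) * y (Sum.inr (Sum.inl (1,4)) : LamIdx) +
    (-2) * x (Sum.inr (Sum.inl (1,5)) : LamIdx) * y (Sum.inr (Sum.inl (1,5)) : LamIdx) +
    (1) * x (Sum.inr (Sum.inl (1,5)) : LamIdx) * y (Sum.inr (Sum.inl (1,6)) : LamIdx) +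
    (1) * x (Sum.inr (Sum.inl (1,6)) : LamIdx) * y (Sum.inr (Sum.inl (1,5)) : LamIdx) +
    (-2) * x (Sum.inr (Sum.inl (1,6)) : LamIdx) * y (Sum.inr (Sum.inl (1,6)) : LamIdx) +
    (1) * x (Sum.inr (Sum.inl (1,7)) : LamIdx) * y (Sum.inr (Sum.inl (1,4)) : LamIdx) +
    (-2) * x (Sum.inr (Sum.inl (1,7)) : LamIdx) * y (Sum.inr (Sum.inl (1,7)) : LamIdx) +
    (-2) * x (Sum.inr (Sum.inr 0) : LamIdx) * y (Sum.inr (Sum.inr 0) : LamIdx) := by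
  simp [B, Matrix.toLinearMap₂'_apply, gram, Fintype.sum_sum_type, Fintype.sum_prod_type, Fin.sum_univ_two, Fin.sum_univ_three, Fin.sum_univ_eight, Fin.sum_univ_one,
    E8v00, E8v01, E8v02, E8v03, E8v04, E8v05, E8v06, E8v07, E8v10, E8v11, E8v12, E8v13, E8v14, E8v15, E8v16, E8v17, E8v20, E8v21, E8v22, E8v23, E8v24, E8v25, E8v26, E8v27, E8v30, E8v31, E8v32, E8v33, E8v34, E8v35, E8v36, E8v37, E8v40, E8v41, E8v42, E8v43, E8v44, E8v45, E8v46, E8v47, E8v50, E8v51, E8v52, E8v53, E8v54, E8v55, E8v56, E8v57, E8v60, E8v61, E8v62, E8v63, E8v64, E8v65, E8v66, E8v67, E8v70, E8v71, E8v72, E8v73, E8v74, E8v75, E8v76, E8v77]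
  simp only [← Prod.mk_zero_zero, ← Prod.mk_one_one]
  ring


abbrev i00 : LamIdx := Sum.inl 0
abbrev i01 : LamIdx := Sum.inl (0,1)
abbrev i22 : LamIdx := Sum.inr (Sum.inr 0)

lemma toQlin_apply (z : LamIdx → ℤ) (j : LamIdx) : toQlin z j = (z j : ℚ) := rfl

/-- standard basis vector over ℤ -/
def sv (j : LamIdx) : LamIdx → ℤ := fun i => if i = j then 1 else 0

lemma Bz_uu (x : LamIdx → ℤ) : B x uu = x i00 + x i01 := by
  rw [B_expand]; simp (config := { decide := true }) [uu]; try ring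

lemma Bz_uu_l (y : LamIdx → ℤ) : B uu y = y i00 + y i01 := by
  rw [B_expand]; simp (config := { decide := true }) [uu]; try ring

lemma Bz_ee1_l (y : LamIdx → ℤ) : B ee1 y = y i01 - y i00 := by
  rw [B_expand]; simp (config := { decide := true }) [ee1]; try ring

lemma Bz_ee2_l (y : LamIdx → ℤ) : B ee2 y = -2 * y i22 := by
  rw [B_expand]; simp (config := { decide := true }) [ee2]; try ring

def Spar : Submodule ℤ (LamIdx → ℤ) where
  carrier := {x | 2 ∣ (x i00 + x i01)}
  add_mem' := by
    intro a b ha hb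
    simp only [Set.mem_setOf_eq, Pi.add_apply] at *
    omega
  zero_mem' := by simp
  smul_mem' := by
    intro c x hx
    simp only [Set.mem_setOf_eq, Pi.smul_apply, smul_eq_mul] at *
    rw [← mul_add]
    exact Dvd.dvd.mul_left hx c

lemma LL_mem (x : LamIdx → ℤ) : x ∈ LL ↔ 2 ∣ (x i00 + x i01) := by
  constructor
  · intro hx
    have hle : LL ≤ Spar := by
      rw [LL]
      refine sup_le ?_ ?_
      · rw [Submodule.span_le]
        rintro v hv
        rcases hv with rfl
        show (2:ℤ) ∣ uu i00 + uu i01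
        decide
      · intro y hy
        have h0 : B y uu = 0 := hy
        rw [Bz_uu] at h0
        show (2:ℤ) ∣ y i00 + y i01
        rw [h0]
        exact dvd_zero 2
    exact hle hx
  · rintro ⟨k, hk⟩
    have h1 : x - k • uu ∈ Lam := by
      show (B.flip uu) (x - k • uu) = 0
      have : (B.flip uu) (x - k • uu) = B (x - k • uu) uu := rfl
      rw [this, map_sub, LinearMap.sub_apply, map_smul, LinearMap.smul_apply, Bz_uu, Bz_uu]
      simp (config := { decide := true }) [uu]
      try omega
    have h2 : k • uu ∈ LL := Submodule.mem_sup_left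
      (Submodule.smul_mem _ k (Submodule.subset_span rfl))
    have h3 : x - k • uu ∈ LL := Submodule.mem_sup_right h1
    have := Submodule.add_mem _ h2 h3
    simpa using this

lemma uu_mem_LL : uu ∈ LL := by rw [LL_mem]; decide
lemma ee1_mem_LL : ee1 ∈ LL := by rw [LL_mem]; decide
lemma ee2_mem_LL : ee2 ∈ LL := by rw [LL_mem]; decide

lemma sv_mem_LL (j : LamIdx) (h1 : i00 ≠ j) (h2 : i01 ≠ j) : sv j ∈ LL := by
  rw [LL_mem]
  show 2 ∣ ((if i00 = j then 1 else 0) + (if i01 = j then 1 else 0) : ℤ)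
  rw [if_neg h1, if_neg h2]; norm_num

lemma Ldual_mem (x : LamIdx → ℚ) :
    x ∈ Ldual ↔ ∀ y ∈ LL, ∃ n : ℤ, Bq x (toQlin y) = n := Iff.rfl

lemma Bq_toQlin (z y : LamIdx → ℤ) : Bq (toQlin z) (toQlin y) = ((B z y : ℤ) : ℚ) := by
  rw [Bq_expand, B_expand]
  push_cast [toQlin_apply]
  ring

lemma pu (x : LamIdx → ℚ) : Bq x (toQlin uu) = x i00 + x i01 := by
  rw [Bq_expand]; simp (config := { decide := true }) [uu, toQlin_apply]; try ring

lemma pe1 (x : LamIdx → ℚ) : Bq x (toQlin ee1) = x i01 - x i00 := by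
  rw [Bq_expand]; simp (config := { decide := true }) [ee1, toQlin_apply]; try ring

lemma pe2 (x : LamIdx → ℚ) : Bq x (toQlin ee2) = -2 * x i22 := by
  rw [Bq_expand]; simp (config := { decide := true }) [ee2, toQlin_apply]; try ring

lemma pU10 (x : LamIdx → ℚ) : Bq x (toQlin (sv (Sum.inl (1,0) : LamIdx))) = x (Sum.inl 1 : LamIdx) := by
  rw [Bq_expand]; simp (config := { decide := true }) [sv, toQlin_apply]; try ring

lemma pU11 (x : LamIdx → ℚ) : Bq x (toQlin (sv (Sum.inl 1 : LamIdx))) = x (Sum.inl (1,0) : LamIdx) := by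
  rw [Bq_expand]; simp (config := { decide := true }) [sv, toQlin_apply]; try ring

lemma pU20 (x : LamIdx → ℚ) : Bq x (toQlin (sv (Sum.inl (2,0) : LamIdx))) = x (Sum.inl (2,1) : LamIdx) := by
  rw [Bq_expand]; simp (config := { decide := true }) [sv, toQlin_apply]; try ring

lemma pU21 (x : LamIdx → ℚ) : Bq x (toQlin (sv (Sum.inl (2,1) : LamIdx))) = x (Sum.inl (2,0) : LamIdx) := by
  rw [Bq_expand]; simp (config := { decide := true }) [sv, toQlin_apply]; try ring

lemma pE8_0_0 (x : LamIdx → ℚ) : Bq x (toQlin (sv (Sum.inr (Sum.inl 0) : LamIdx))) =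
    (-2) * x (Sum.inr (Sum.inl 0) : LamIdx) + (1) * x (Sum.inr (Sum.inl (0,1)) : LamIdx) := by
  rw [Bq_expand]; simp (config := { decide := true }) [sv, toQlin_apply]; try ring

lemma pE8_0_1 (x : LamIdx → ℚ) : Bq x (toQlin (sv (Sum.inr (Sum.inl (0,1)) : LamIdx))) =
    (1) * x (Sum.inr (Sum.inl 0) : LamIdx) + (-2) * x (Sum.inr (Sum.inl (0,1)) : LamIdx) + (1) * x (Sum.inr (Sum.inl (0,2)) : LamIdx) := by
  rw [Bq_expand]; simp (config := { decide := true }) [sv, toQlin_apply]; try ring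

lemma pE8_0_2 (x : LamIdx → ℚ) : Bq x (toQlin (sv (Sum.inr (Sum.inl (0,2)) : LamIdx))) =
    (1) * x (Sum.inr (Sum.inl (0,1)) : LamIdx) + (-2) * x (Sum.inr (Sum.inl (0,2)) : LamIdx) + (1) * x (Sum.inr (Sum.inl (0,3)) : LamIdx) := by
  rw [Bq_expand]; simp (config := { decide := true }) [sv, toQlin_apply]; try ring

lemma pE8_0_3 (x : LamIdx → ℚ) : Bq x (toQlin (sv (Sum.inr (Sum.inl (0,3)) : LamIdx))) =
    (1) * x (Sum.inr (Sum.inl (0,2)) : LamIdx) + (-2) * x (Sum.inr (Sum.inl (0,3)) : LamIdx) + (1) * x (Sum.inr (Sum.inl (0,4)) : LamIdx) := by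
  rw [Bq_expand]; simp (config := { decide := true }) [sv, toQlin_apply]; try ring

lemma pE8_0_4 (x : LamIdx → ℚ) : Bq x (toQlin (sv (Sum.inr (Sum.inl (0,4)) : LamIdx))) =
    (1) * x (Sum.inr (Sum.inl (0,3)) : LamIdx) + (-2) * x (Sum.inr (Sum.inl (0,4)) : LamIdx) + (1) * x (Sum.inr (Sum.inl (0,5)) : LamIdx) + (1) * x (Sum.inr (Sum.inl (0,7)) : LamIdx) := by
  rw [Bq_expand]; simp (config := { decide := true }) [sv, toQlin_apply]; try ring

lemma pE8_0_5 (x : LamIdx → ℚ) : Bq x (toQlin (sv (Sum.inr (Sum.inl (0,5)) : LamIdx))) =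
    (1) * x (Sum.inr (Sum.inl (0,4)) : LamIdx) + (-2) * x (Sum.inr (Sum.inl (0,5)) : LamIdx) + (1) * x (Sum.inr (Sum.inl (0,6)) : LamIdx) := by
  rw [Bq_expand]; simp (config := { decide := true }) [sv, toQlin_apply]; try ring

lemma pE8_0_6 (x : LamIdx → ℚ) : Bq x (toQlin (sv (Sum.inr (Sum.inl (0,6)) : LamIdx))) =
    (1) * x (Sum.inr (Sum.inl (0,5)) : LamIdx) + (-2) * x (Sum.inr (Sum.inl (0,6)) : LamIdx) := by
  rw [Bq_expand]; simp (config := { decide := true }) [sv, toQlin_apply]; try ring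

lemma pE8_0_7 (x : LamIdx → ℚ) : Bq x (toQlin (sv (Sum.inr (Sum.inl (0,7)) : LamIdx))) =
    (1) * x (Sum.inr (Sum.inl (0,4)) : LamIdx) + (-2) * x (Sum.inr (Sum.inl (0,7)) : LamIdx) := by
  rw [Bq_expand]; simp (config := { decide := true }) [sv, toQlin_apply]; try ring

lemma pE8_1_0 (x : LamIdx → ℚ) : Bq x (toQlin (sv (Sum.inr (Sum.inl (1,0)) : LamIdx))) =
    (-2) * x (Sum.inr (Sum.inl (1,0)) : LamIdx) + (1) * x (Sum.inr (Sum.inl 1) : LamIdx) := by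
  rw [Bq_expand]; simp (config := { decide := true }) [sv, toQlin_apply]; try ring

lemma pE8_1_1 (x : LamIdx → ℚ) : Bq x (toQlin (sv (Sum.inr (Sum.inl 1) : LamIdx))) =
    (1) * x (Sum.inr (Sum.inl (1,0)) : LamIdx) + (-2) * x (Sum.inr (Sum.inl 1) : LamIdx) + (1) * x (Sum.inr (Sum.inl (1,2)) : LamIdx) := by
  rw [Bq_expand]; simp (config := { decide := true }) [sv, toQlin_apply]; try ring

lemma pE8_1_2 (x : LamIdx → ℚ) : Bq x (toQlin (sv (Sum.inr (Sum.inl (1,2)) : LamIdx))) =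
    (1) * x (Sum.inr (Sum.inl 1) : LamIdx) + (-2) * x (Sum.inr (Sum.inl (1,2)) : LamIdx) + (1) * x (Sum.inr (Sum.inl (1,3)) : LamIdx) := by
  rw [Bq_expand]; simp (config := { decide := true }) [sv, toQlin_apply]; try ring

lemma pE8_1_3 (x : LamIdx → ℚ) : Bq x (toQlin (sv (Sum.inr (Sum.inl (1,3)) : LamIdx))) =
    (1) * x (Sum.inr (Sum.inl (1,2)) : LamIdx) + (-2) * x (Sum.inr (Sum.inl (1,3)) : LamIdx) + (1) * x (Sum.inr (Sum.inl (1,4)) : LamIdx) := by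
  rw [Bq_expand]; simp (config := { decide := true }) [sv, toQlin_apply]; try ring

lemma pE8_1_4 (x : LamIdx → ℚ) : Bq x (toQlin (sv (Sum.inr (Sum.inl (1,4)) : LamIdx))) =
    (1) * x (Sum.inr (Sum.inl (1,3)) : LamIdx) + (-2) * x (Sum.inr (Sum.inl (1,4)) : LamIdx) + (1) * x (Sum.inr (Sum.inl (1,5)) : LamIdx) + (1) * x (Sum.inr (Sum.inl (1,7)) : LamIdx) := by
  rw [Bq_expand]; simp (config := { decide := true }) [sv, toQlin_apply]; try ring

lemma pE8_1_5 (x : LamIdx → ℚ) : Bq x (toQlin (sv (Sum.inr (Sum.inl (1,5)) : LamIdx))) =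
    (1) * x (Sum.inr (Sum.inl (1,4)) : LamIdx) + (-2) * x (Sum.inr (Sum.inl (1,5)) : LamIdx) + (1) * x (Sum.inr (Sum.inl (1,6)) : LamIdx) := by
  rw [Bq_expand]; simp (config := { decide := true }) [sv, toQlin_apply]; try ring

lemma pE8_1_6 (x : LamIdx → ℚ) : Bq x (toQlin (sv (Sum.inr (Sum.inl (1,6)) : LamIdx))) =
    (1) * x (Sum.inr (Sum.inl (1,5)) : LamIdx) + (-2) * x (Sum.inr (Sum.inl (1,6)) : LamIdx) := by
  rw [Bq_expand]; simp (config := { decide := true }) [sv, toQlin_apply]; try ring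

lemma pE8_1_7 (x : LamIdx → ℚ) : Bq x (toQlin (sv (Sum.inr (Sum.inl (1,7)) : LamIdx))) =
    (1) * x (Sum.inr (Sum.inl (1,4)) : LamIdx) + (-2) * x (Sum.inr (Sum.inl (1,7)) : LamIdx) := by
  rw [Bq_expand]; simp (config := { decide := true }) [sv, toQlin_apply]; try ring

lemma extract0 (x : LamIdx → ℚ)
    (h0 : ∃ n : ℤ, (-2) * x (Sum.inr (Sum.inl 0) : LamIdx) + (1) * x (Sum.inr (Sum.inl (0,1)) : LamIdx) = (n : ℚ))
    (h1 : ∃ n : ℤ, (1) * x (Sum.inr (Sum.inl 0) : LamIdx) + (-2) * x (Sum.inr (Sum.inl (0,1)) : LamIdx) + (1) * x (Sum.inr (Sum.inl (0,2)) : LamIdx) = (n : ℚ))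
    (h2 : ∃ n : ℤ, (1) * x (Sum.inr (Sum.inl (0,1)) : LamIdx) + (-2) * x (Sum.inr (Sum.inl (0,2)) : LamIdx) + (1) * x (Sum.inr (Sum.inl (0,3)) : LamIdx) = (n : ℚ))
    (h3 : ∃ n : ℤ, (1) * x (Sum.inr (Sum.inl (0,2)) : LamIdx) + (-2) * x (Sum.inr (Sum.inl (0,3)) : LamIdx) + (1) * x (Sum.inr (Sum.inl (0,4)) : LamIdx) = (n : ℚ))
    (h4 : ∃ n : ℤ, (1) * x (Sum.inr (Sum.inl (0,3)) : LamIdx) + (-2) * x (Sum.inr (Sum.inl (0,4)) : LamIdx) + (1) * x (Sum.inr (Sum.inl (0,5)) : LamIdx) + (1) * x (Sum.inr (Sum.inl (0,7)) : LamIdx) = (n : ℚ))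
    (h5 : ∃ n : ℤ, (1) * x (Sum.inr (Sum.inl (0,4)) : LamIdx) + (-2) * x (Sum.inr (Sum.inl (0,5)) : LamIdx) + (1) * x (Sum.inr (Sum.inl (0,6)) : LamIdx) = (n : ℚ))
    (h6 : ∃ n : ℤ, (1) * x (Sum.inr (Sum.inl (0,5)) : LamIdx) + (-2) * x (Sum.inr (Sum.inl (0,6)) : LamIdx) = (n : ℚ))
    (h7 : ∃ n : ℤ, (1) * x (Sum.inr (Sum.inl (0,4)) : LamIdx) + (-2) * x (Sum.inr (Sum.inl (0,7)) : LamIdx) = (n : ℚ))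
    : (∃ n : ℤ, x (Sum.inr (Sum.inl 0) : LamIdx) = (n : ℚ)) ∧ (∃ n : ℤ, x (Sum.inr (Sum.inl (0,1)) : LamIdx) = (n : ℚ)) ∧ (∃ n : ℤ, x (Sum.inr (Sum.inl (0,2)) : LamIdx) = (n : ℚ)) ∧ (∃ n : ℤ, x (Sum.inr (Sum.inl (0,3)) : LamIdx) = (n : ℚ)) ∧ (∃ n : ℤ, x (Sum.inr (Sum.inl (0,4)) : LamIdx) = (n : ℚ)) ∧ (∃ n : ℤ, x (Sum.inr (Sum.inl (0,5)) : LamIdx) = (n : ℚ)) ∧ (∃ n : ℤ, x (Sum.inr (Sum.inl (0,6)) : LamIdx) = (n : ℚ)) ∧ (∃ n : ℤ, x (Sum.inr (Sum.inl (0,7)) : LamIdx) = (n : ℚ)) := by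
  obtain ⟨n0, e0⟩ := h0
  obtain ⟨n1, e1⟩ := h1
  obtain ⟨n2, e2⟩ := h2
  obtain ⟨n3, e3⟩ := h3
  obtain ⟨n4, e4⟩ := h4
  obtain ⟨n5, e5⟩ := h5
  obtain ⟨n6, e6⟩ := h6
  obtain ⟨n7, e7⟩ := h7
  refine ⟨⟨-((2)*n0+(3)*n1+(4)*n2+(5)*n3+(6)*n4+(4)*n5+(2)*n6+(3)*n7), ?_⟩, ⟨-((3)*n0+(6)*n1+(8)*n2+(10)*n3+(12)*n4+(8)*n5+(4)*n6+(6)*n7), ?_⟩, ⟨-((4)*n0+(8)*n1+(12)*n2+(15)*n3+(18)*n4+(12)*n5+(6)*n6+(9)*n7), ?_⟩, ⟨-((5)*n0+(10)*n1+(15)*n2+(20)*n3+(24)*n4+(16)*n5+(8)*n6+(12)*n7), ?_⟩, ⟨-((6)*n0+(12)*n1+(18)*n2+(24)*n3+(30)*n4+(20)*n5+(10)*n6+(15)*n7), ?_⟩, ⟨-((4)*n0+(8)*n1+(12)*n2+(16)*n3+(20)*n4+(14)*n5+(7)*n6+(10)*n7), ?_⟩, ⟨-((2)*n0+(4)*n1+(6)*n2+(8)*n3+(10)*n4+(7)*n5+(4)*n6+(5)*n7),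 ?_⟩, ⟨-((3)*n0+(6)*n1+(9)*n2+(12)*n3+(15)*n4+(10)*n5+(5)*n6+(8)*n7), ?_⟩⟩
  · push_cast
    linear_combination ((-2 : ℚ)) * e0 + ((-3 : ℚ)) * e1 + ((-4 : ℚ)) * e2 + ((-5 : ℚ)) * e3 + ((-6 : ℚ)) * e4 + ((-4 : ℚ)) * e5 + ((-2 : ℚ)) * e6 + ((-3 : ℚ)) * e7
  · push_cast
    linear_combination ((-3 : ℚ)) * e0 + ((-6 : ℚ)) * e1 + ((-8 : ℚ)) * e2 + ((-10 : ℚ)) * e3 + ((-12 : ℚ)) * e4 + ((-8 : ℚ)) * e5 + ((-4 : ℚ)) * e6 + ((-6 : ℚ)) * e7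
  · push_cast
    linear_combination ((-4 : ℚ)) * e0 + ((-8 : ℚ)) * e1 + ((-12 : ℚ)) * e2 + ((-15 : ℚ)) * e3 + ((-18 : ℚ)) * e4 + ((-12 : ℚ)) * e5 + ((-6 : ℚ)) * e6 + ((-9 : ℚ)) * e7
  · push_cast
    linear_combination ((-5 : ℚ)) * e0 + ((-10 : ℚ)) * e1 + ((-15 : ℚ)) * e2 + ((-20 : ℚ)) * e3 + ((-24 : ℚ)) * e4 + ((-16 : ℚ)) * e5 + ((-8 : ℚ)) * e6 + ((-12 : ℚ)) * e7
  · push_cast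
    linear_combination ((-6 : ℚ)) * e0 + ((-12 : ℚ)) * e1 + ((-18 : ℚ)) * e2 + ((-24 : ℚ)) * e3 + ((-30 : ℚ)) * e4 + ((-20 : ℚ)) * e5 + ((-10 : ℚ)) * e6 + ((-15 : ℚ)) * e7
  · push_cast
    linear_combination ((-4 : ℚ)) * e0 + ((-8 : ℚ)) * e1 + ((-12 : ℚ)) * e2 + ((-16 : ℚ)) * e3 + ((-20 : ℚ)) * e4 + ((-14 : ℚ)) * e5 + ((-7 : ℚ)) * e6 + ((-10 : ℚ)) * e7
  · push_cast
    linear_combination ((-2 : ℚ)) * e0 + ((-4 : ℚ)) * e1 + ((-6 : ℚ)) * e2 + ((-8 : ℚ)) * e3 + ((-10 : ℚ)) * e4 + ((-7 : ℚ)) * e5 + ((-4 : ℚ)) * e6 + ((-5 : ℚ)) * e7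
  · push_cast
    linear_combination ((-3 : ℚ)) * e0 + ((-6 : ℚ)) * e1 + ((-9 : ℚ)) * e2 + ((-12 : ℚ)) * e3 + ((-15 : ℚ)) * e4 + ((-10 : ℚ)) * e5 + ((-5 : ℚ)) * e6 + ((-8 : ℚ)) * e7

lemma extract1 (x : LamIdx → ℚ)
    (h0 : ∃ n : ℤ, (-2) * x (Sum.inr (Sum.inl (1,0)) : LamIdx) + (1) * x (Sum.inr (Sum.inl 1) : LamIdx) = (n : ℚ))
    (h1 : ∃ n : ℤ, (1) * x (Sum.inr (Sum.inl (1,0)) : LamIdx) + (-2) * x (Sum.inr (Sum.inl 1) : LamIdx) + (1) * x (Sum.inr (Sum.inl (1,2)) : LamIdx) = (n : ℚ))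
    (h2 : ∃ n : ℤ, (1) * x (Sum.inr (Sum.inl 1) : LamIdx) + (-2) * x (Sum.inr (Sum.inl (1,2)) : LamIdx) + (1) * x (Sum.inr (Sum.inl (1,3)) : LamIdx) = (n : ℚ))
    (h3 : ∃ n : ℤ, (1) * x (Sum.inr (Sum.inl (1,2)) : LamIdx) + (-2) * x (Sum.inr (Sum.inl (1,3)) : LamIdx) + (1) * x (Sum.inr (Sum.inl (1,4)) : LamIdx) = (n : ℚ))
    (h4 : ∃ n : ℤ, (1) * x (Sum.inr (Sum.inl (1,3)) : LamIdx) + (-2) * x (Sum.inr (Sum.inl (1,4)) : LamIdx) + (1) * x (Sum.inr (Sum.inl (1,5)) : LamIdx) + (1) * x (Sum.inr (Sum.inl (1,7)) : LamIdx) = (n : ℚ))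
    (h5 : ∃ n : ℤ, (1) * x (Sum.inr (Sum.inl (1,4)) : LamIdx) + (-2) * x (Sum.inr (Sum.inl (1,5)) : LamIdx) + (1) * x (Sum.inr (Sum.inl (1,6)) : LamIdx) = (n : ℚ))
    (h6 : ∃ n : ℤ, (1) * x (Sum.inr (Sum.inl (1,5)) : LamIdx) + (-2) * x (Sum.inr (Sum.inl (1,6)) : LamIdx) = (n : ℚ))
    (h7 : ∃ n : ℤ, (1) * x (Sum.inr (Sum.inl (1,4)) : LamIdx) + (-2) * x (Sum.inr (Sum.inl (1,7)) : LamIdx) = (n : ℚ))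
    : (∃ n : ℤ, x (Sum.inr (Sum.inl (1,0)) : LamIdx) = (n : ℚ)) ∧ (∃ n : ℤ, x (Sum.inr (Sum.inl 1) : LamIdx) = (n : ℚ)) ∧ (∃ n : ℤ, x (Sum.inr (Sum.inl (1,2)) : LamIdx) = (n : ℚ)) ∧ (∃ n : ℤ, x (Sum.inr (Sum.inl (1,3)) : LamIdx) = (n : ℚ)) ∧ (∃ n : ℤ, x (Sum.inr (Sum.inl (1,4)) : LamIdx) = (n : ℚ)) ∧ (∃ n : ℤ, x (Sum.inr (Sum.inl (1,5)) : LamIdx) = (n : ℚ)) ∧ (∃ n : ℤ, x (Sum.inr (Sum.inl (1,6)) : LamIdx) = (n : ℚ)) ∧ (∃ n : ℤ, x (Sum.inr (Sum.inl (1,7)) : LamIdx) = (n : ℚ)) := by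
  obtain ⟨n0, e0⟩ := h0
  obtain ⟨n1, e1⟩ := h1
  obtain ⟨n2, e2⟩ := h2
  obtain ⟨n3, e3⟩ := h3
  obtain ⟨n4, e4⟩ := h4
  obtain ⟨n5, e5⟩ := h5
  obtain ⟨n6, e6⟩ := h6
  obtain ⟨n7, e7⟩ := h7
  refine ⟨⟨-((2)*n0+(3)*n1+(4)*n2+(5)*n3+(6)*n4+(4)*n5+(2)*n6+(3)*n7), ?_⟩, ⟨-((3)*n0+(6)*n1+(8)*n2+(10)*n3+(12)*n4+(8)*n5+(4)*n6+(6)*n7), ?_⟩, ⟨-((4)*n0+(8)*n1+(12)*n2+(15)*n3+(18)*n4+(12)*n5+(6)*n6+(9)*n7), ?_⟩, ⟨-((5)*n0+(10)*n1+(15)*n2+(20)*n3+(24)*n4+(16)*n5+(8)*n6+(12)*n7), ?_⟩, ⟨-((6)*n0+(12)*n1+(18)*n2+(24)*n3+(30)*n4+(20)*n5+(10)*n6+(15)*n7), ?_⟩, ⟨-((4)*n0+(8)*n1+(12)*n2+(16)*n3+(20)*n4+(14)*n5+(7)*n6+(10)*n7), ?_⟩, ⟨-((2)*n0+(4)*n1+(6)*n2+(8)*n3+(10)*n4+(7)*n5+(4)*n6+(5)*n7),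 ?_⟩, ⟨-((3)*n0+(6)*n1+(9)*n2+(12)*n3+(15)*n4+(10)*n5+(5)*n6+(8)*n7), ?_⟩⟩
  · push_cast
    linear_combination ((-2 : ℚ)) * e0 + ((-3 : ℚ)) * e1 + ((-4 : ℚ)) * e2 + ((-5 : ℚ)) * e3 + ((-6 : ℚ)) * e4 + ((-4 : ℚ)) * e5 + ((-2 : ℚ)) * e6 + ((-3 : ℚ)) * e7
  · push_cast
    linear_combination ((-3 : ℚ)) * e0 + ((-6 : ℚ)) * e1 + ((-8 : ℚ)) * e2 + ((-10 : ℚ)) * e3 + ((-12 : ℚ)) * e4 + ((-8 : ℚ)) * e5 + ((-4 : ℚ)) * e6 + ((-6 : ℚ)) * e7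
  · push_cast
    linear_combination ((-4 : ℚ)) * e0 + ((-8 : ℚ)) * e1 + ((-12 : ℚ)) * e2 + ((-15 : ℚ)) * e3 + ((-18 : ℚ)) * e4 + ((-12 : ℚ)) * e5 + ((-6 : ℚ)) * e6 + ((-9 : ℚ)) * e7
  · push_cast
    linear_combination ((-5 : ℚ)) * e0 + ((-10 : ℚ)) * e1 + ((-15 : ℚ)) * e2 + ((-20 : ℚ)) * e3 + ((-24 : ℚ)) * e4 + ((-16 : ℚ)) * e5 + ((-8 : ℚ)) * e6 + ((-12 : ℚ)) * e7
  · push_cast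
    linear_combination ((-6 : ℚ)) * e0 + ((-12 : ℚ)) * e1 + ((-18 : ℚ)) * e2 + ((-24 : ℚ)) * e3 + ((-30 : ℚ)) * e4 + ((-20 : ℚ)) * e5 + ((-10 : ℚ)) * e6 + ((-15 : ℚ)) * e7
  · push_cast
    linear_combination ((-4 : ℚ)) * e0 + ((-8 : ℚ)) * e1 + ((-12 : ℚ)) * e2 + ((-16 : ℚ)) * e3 + ((-20 : ℚ)) * e4 + ((-14 : ℚ)) * e5 + ((-7 : ℚ)) * e6 + ((-10 : ℚ)) * e7
  · push_cast
    linear_combination ((-2 : ℚ)) * e0 + ((-4 : ℚ)) * e1 + ((-6 : ℚ)) * e2 + ((-8 : ℚ)) * e3 + ((-10 : ℚ)) * e4 + ((-7 : ℚ)) * e5 + ((-4 : ℚ)) * e6 + ((-5 : ℚ)) * e7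
  · push_cast
    linear_combination ((-3 : ℚ)) * e0 + ((-6 : ℚ)) * e1 + ((-9 : ℚ)) * e2 + ((-12 : ℚ)) * e3 + ((-15 : ℚ)) * e4 + ((-10 : ℚ)) * e5 + ((-5 : ℚ)) * e6 + ((-8 : ℚ)) * e7


lemma hu_mem : (2⁻¹ : ℚ) • toQlin uu ∈ Ldual := by
  rw [Ldual_mem]
  intro y hy
  obtain ⟨k, hk⟩ := (LL_mem y).1 hy
  refine ⟨k, ?_⟩
  rw [LinearMap.map_smul₂, Bq_toQlin, Bz_uu_l, smul_eq_mul]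
  have : ((y i00 + y i01 : ℤ) : ℚ) = ((2 * k : ℤ) : ℚ) := by rw [hk]
  push_cast at this ⊢
  linarith

lemma he1_mem : (2⁻¹ : ℚ) • toQlin ee1 ∈ Ldual := by
  rw [Ldual_mem]
  intro y hy
  obtain ⟨k, hk⟩ := (LL_mem y).1 hy
  refine ⟨k - y i00, ?_⟩
  rw [LinearMap.map_smul₂, Bq_toQlin, Bz_ee1_l, smul_eq_mul]
  have : ((y i00 + y i01 : ℤ) : ℚ) = ((2 * k : ℤ) : ℚ) := by rw [hk]
  push_cast at this ⊢
  linarith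

lemma he2_mem : (2⁻¹ : ℚ) • toQlin ee2 ∈ Ldual := by
  rw [Ldual_mem]
  intro y hy
  refine ⟨-(y i22), ?_⟩
  rw [LinearMap.map_smul₂, Bq_toQlin, Bz_ee2_l, smul_eq_mul]
  push_cast
  ring

lemma Lmap_le_Ldual : Lmap ≤ Ldual := by
  rintro x ⟨z, hz, rfl⟩
  rw [Ldual_mem]
  intro y hy
  exact ⟨B z y, Bq_toQlin z y⟩

set_option maxHeartbeats 1000000 in
lemma dual_decomp (x : LamIdx → ℚ) (hx : x ∈ Ldual) :
    ∃ (α β γ : ℤ) (z : LamIdx → ℤ), z ∈ LL ∧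
      x = toQlin z + α • ((2⁻¹ : ℚ) • toQlin uu) + β • ((2⁻¹ : ℚ) • toQlin ee1)
        + γ • ((2⁻¹ : ℚ) • toQlin ee2) := by
  rw [Ldual_mem] at hx
  obtain ⟨na, ha⟩ := hx uu uu_mem_LL
  rw [pu] at ha
  obtain ⟨nb, hb⟩ := hx ee1 ee1_mem_LL
  rw [pe1] at hb
  obtain ⟨nc, hc⟩ := hx ee2 ee2_mem_LL
  rw [pe2] at hc
  obtain ⟨m11, hU11⟩ := hx (sv (Sum.inl (1,0))) (sv_mem_LL _ (by decide) (by decide))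
  rw [pU10] at hU11
  obtain ⟨m10, hU10⟩ := hx (sv (Sum.inl 1)) (sv_mem_LL _ (by decide) (by decide))
  rw [pU11] at hU10
  obtain ⟨m21, hU21⟩ := hx (sv (Sum.inl (2,0))) (sv_mem_LL _ (by decide) (by decide))
  rw [pU20] at hU21
  obtain ⟨m20, hU20⟩ := hx (sv (Sum.inl (2,1))) (sv_mem_LL _ (by decide) (by decide))
  rw [pU21] at hU20
  have hE0 := extract0 x
    (by simpa only [pE8_0_0] using hx _ (sv_mem_LL (Sum.inr (Sum.inl 0)) (by decide) (by decide)))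
    (by simpa only [pE8_0_1] using hx _ (sv_mem_LL (Sum.inr (Sum.inl (0,1))) (by decide) (by decide)))
    (by simpa only [pE8_0_2] using hx _ (sv_mem_LL (Sum.inr (Sum.inl (0,2))) (by decide) (by decide)))
    (by simpa only [pE8_0_3] using hx _ (sv_mem_LL (Sum.inr (Sum.inl (0,3))) (by decide) (by decide)))
    (by simpa only [pE8_0_4] using hx _ (sv_mem_LL (Sum.inr (Sum.inl (0,4))) (by decide) (by decide)))
    (by simpa only [pE8_0_5] using hx _ (sv_mem_LL (Sum.inr (Sum.inl (0,5))) (by decide) (by decide)))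
    (by simpa only [pE8_0_6] using hx _ (sv_mem_LL (Sum.inr (Sum.inl (0,6))) (by decide) (by decide)))
    (by simpa only [pE8_0_7] using hx _ (sv_mem_LL (Sum.inr (Sum.inl (0,7))) (by decide) (by decide)))
  have hE1 := extract1 x
    (by simpa only [pE8_1_0] using hx _ (sv_mem_LL (Sum.inr (Sum.inl (1,0))) (by decide) (by decide)))
    (by simpa only [pE8_1_1] using hx _ (sv_mem_LL (Sum.inr (Sum.inl 1)) (by decide) (by decide)))
    (by simpa only [pE8_1_2] using hx _ (sv_mem_LL (Sum.inr (Sum.inl (1,2))) (by decide) (by decide)))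
    (by simpa only [pE8_1_3] using hx _ (sv_mem_LL (Sum.inr (Sum.inl (1,3))) (by decide) (by decide)))
    (by simpa only [pE8_1_4] using hx _ (sv_mem_LL (Sum.inr (Sum.inl (1,4))) (by decide) (by decide)))
    (by simpa only [pE8_1_5] using hx _ (sv_mem_LL (Sum.inr (Sum.inl (1,5))) (by decide) (by decide)))
    (by simpa only [pE8_1_6] using hx _ (sv_mem_LL (Sum.inr (Sum.inl (1,6))) (by decide) (by decide)))
    (by simpa only [pE8_1_7] using hx _ (sv_mem_LL (Sum.inr (Sum.inl (1,7))) (by decide) (by decide)))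
  obtain ⟨hF00, hF01, hF02, hF03, hF04, hF05, hF06, hF07⟩ := hE0
  obtain ⟨hF10, hF11, hF12, hF13, hF14, hF15, hF16, hF17⟩ := hE1
  have H : ∀ j : LamIdx, ∃ n : ℤ,
      x j - (na : ℚ) * 2⁻¹ * (uu j : ℚ) + (nb : ℚ) * 2⁻¹ * (ee1 j : ℚ)
        + (nc : ℚ) * 2⁻¹ * (ee2 j : ℚ) = (n : ℚ) := by
    intro j
    rcases j with ⟨a2, i2⟩ | jj
    · fin_cases a2 <;> fin_cases i2
      · refine ⟨0, ?_⟩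
        simp (config := { decide := true }) [uu, ee1, ee2]
        push_cast
        exact (by linarith [ha, hb] : x i00 - (na : ℚ) * 2⁻¹ + (nb : ℚ) * 2⁻¹ = 0)
      · refine ⟨0, ?_⟩
        simp (config := { decide := true }) [uu, ee1, ee2]
        push_cast
        linarith [ha, hb]
      · exact ⟨m10, by simp (config := { decide := true }) [uu, ee1, ee2]; exact hU10⟩
      · exact ⟨m11, by simp (config := { decide := true }) [uu, ee1, ee2]; exact hU11⟩
      · exact ⟨m20, by simp (config := { decide := true }) [uu, ee1, ee2]; exact hU20⟩
      · exact ⟨m21, by simp (config := { decide := true }) [uu, ee1, ee2]; exact hU21⟩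
    · rcases jj with ⟨a2, k⟩ | i2
      · fin_cases a2 <;> fin_cases k
        · obtain ⟨n, hn⟩ := hF00
          exact ⟨n, by simp (config := { decide := true }) [uu, ee1, ee2]; exact hn⟩
        · obtain ⟨n, hn⟩ := hF01
          exact ⟨n, by simp (config := { decide := true }) [uu, ee1, ee2]; exact hn⟩
        · obtain ⟨n, hn⟩ := hF02
          exact ⟨n, by simp (config := { decide := true }) [uu, ee1, ee2]; exact hn⟩
        · obtain ⟨n, hn⟩ := hF03
          exact ⟨n, by simp (config := { decide := true }) [uu, ee1, ee2]; exact hn⟩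
        · obtain ⟨n, hn⟩ := hF04
          exact ⟨n, by simp (config := { decide := true }) [uu, ee1, ee2]; exact hn⟩
        · obtain ⟨n, hn⟩ := hF05
          exact ⟨n, by simp (config := { decide := true }) [uu, ee1, ee2]; exact hn⟩
        · obtain ⟨n, hn⟩ := hF06
          exact ⟨n, by simp (config := { decide := true }) [uu, ee1, ee2]; exact hn⟩
        · obtain ⟨n, hn⟩ := hF07
          exact ⟨n, by simp (config := { decide := true }) [uu, ee1, ee2]; exact hn⟩
        · obtain ⟨n, hn⟩ := hF10
          exact ⟨n, by simp (config := { decide := true }) [uu, ee1, ee2]; exact hn⟩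
        · obtain ⟨n, hn⟩ := hF11
          exact ⟨n, by simp (config := { decide := true }) [uu, ee1, ee2]; exact hn⟩
        · obtain ⟨n, hn⟩ := hF12
          exact ⟨n, by simp (config := { decide := true }) [uu, ee1, ee2]; exact hn⟩
        · obtain ⟨n, hn⟩ := hF13
          exact ⟨n, by simp (config := { decide := true }) [uu, ee1, ee2]; exact hn⟩
        · obtain ⟨n, hn⟩ := hF14
          exact ⟨n, by simp (config := { decide := true }) [uu, ee1, ee2]; exact hn⟩
        · obtain ⟨n, hn⟩ := hF15
          exact ⟨n, by simp (config := { decide := true }) [uu, ee1, ee2]; exact hn⟩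
        · obtain ⟨n, hn⟩ := hF16
          exact ⟨n, by simp (config := { decide := true }) [uu, ee1, ee2]; exact hn⟩
        · obtain ⟨n, hn⟩ := hF17
          exact ⟨n, by simp (config := { decide := true }) [uu, ee1, ee2]; exact hn⟩
      · fin_cases i2
        refine ⟨0, ?_⟩
        simp (config := { decide := true }) [uu, ee1, ee2]
        push_cast
        linarith [hc]
  refine ⟨na, -nb, -nc, fun j => (H j).choose, ?_, ?_⟩
  · rw [LL_mem]
    have e0 : x i00 - (na : ℚ) * 2⁻¹ * ((1 : ℤ) : ℚ) + (nb : ℚ) * 2⁻¹ * ((1 : ℤ) : ℚ)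
        + (nc : ℚ) * 2⁻¹ * ((0 : ℤ) : ℚ) = ((H i00).choose : ℚ) := (H i00).choose_spec
    have e1 : x i01 - (na : ℚ) * 2⁻¹ * ((1 : ℤ) : ℚ) + (nb : ℚ) * 2⁻¹ * ((-1 : ℤ) : ℚ)
        + (nc : ℚ) * 2⁻¹ * ((0 : ℤ) : ℚ) = ((H i01).choose : ℚ) := (H i01).choose_spec
    push_cast at e0 e1
    have z0 : (H i00).choose = 0 := by
      have : ((H i00).choose : ℚ) = 0 := by linear_combination (-1 : ℚ) * e0 + 2⁻¹ * ha - 2⁻¹ * hb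
      exact_mod_cast this
    have z1 : (H i01).choose = 0 := by
      have : ((H i01).choose : ℚ) = 0 := by linear_combination (-1 : ℚ) * e1 + 2⁻¹ * ha + 2⁻¹ * hb
      exact_mod_cast this
    show (2:ℤ) ∣ (H i00).choose + (H i01).choose
    rw [z0, z1]
    decide
  · funext j
    have h := (H j).choose_spec
    simp only [Pi.add_apply, Pi.smul_apply, toQlin_apply]
    push_cast [zsmul_eq_mul, smul_eq_mul]
    linarith [h]

lemma Ldual_eq : Ldual = Lmap ⊔ Submodule.span ℤ
    {(2⁻¹ : ℚ) • toQlin uu, (2⁻¹ : ℚ) • toQlin ee1, (2⁻¹ : ℚ) • toQlin ee2} := by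
  apply le_antisymm
  · intro x hx
    obtain ⟨α, β, γ, z, hz, hxe⟩ := dual_decomp x hx
    rw [hxe]
    refine Submodule.add_mem _ (Submodule.add_mem _ (Submodule.add_mem _ ?_ ?_) ?_) ?_
    · exact Submodule.mem_sup_left ⟨z, hz, rfl⟩
    · exact Submodule.mem_sup_right (Submodule.smul_mem _ α (Submodule.subset_span (by simp)))
    · exact Submodule.mem_sup_right (Submodule.smul_mem _ β (Submodule.subset_span (by simp)))
    · exact Submodule.mem_sup_right (Submodule.smul_mem _ γ (Submodule.subset_span (by simp)))
  · refine sup_le Lmap_le_Ldual ?_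
    rw [Submodule.span_le]
    rintro v hv
    simp only [Set.mem_insert_iff, Set.mem_singleton_iff] at hv
    rcases hv with rfl | rfl | rfl
    exacts [hu_mem, he1_mem, he2_mem]

lemma hu_not_mem : (2⁻¹ : ℚ) • toQlin uu ∉ Lmap := by
  rintro ⟨z, hz, hzeq⟩
  have h : ((z i00 : ℤ) : ℚ) = 2⁻¹ * ((1 : ℤ) : ℚ) := congrFun hzeq i00
  have h2 : ((2 * z i00 : ℤ) : ℚ) = ((1 : ℤ) : ℚ) := by push_cast at h ⊢; linarith
  have h3 : (2 * z i00 : ℤ) = 1 := by exact_mod_cast h2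
  omega

lemma he1_not_mem : (2⁻¹ : ℚ) • toQlin ee1 ∉ Lmap := by
  rintro ⟨z, hz, hzeq⟩
  have h : ((z i00 : ℤ) : ℚ) = 2⁻¹ * ((1 : ℤ) : ℚ) := congrFun hzeq i00
  have h2 : ((2 * z i00 : ℤ) : ℚ) = ((1 : ℤ) : ℚ) := by push_cast at h ⊢; linarith
  have h3 : (2 * z i00 : ℤ) = 1 := by exact_mod_cast h2
  omega

lemma he2_not_mem : (2⁻¹ : ℚ) • toQlin ee2 ∉ Lmap := by
  rintro ⟨z, hz, hzeq⟩
  have h : ((z i22 : ℤ) : ℚ) = 2⁻¹ * ((1 : ℤ) : ℚ) := congrFun hzeq i22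
  have h2 : ((2 * z i22 : ℤ) : ℚ) = ((1 : ℤ) : ℚ) := by push_cast at h ⊢; linarith
  have h3 : (2 * z i22 : ℤ) = 1 := by exact_mod_cast h2
  omega

lemma hu2_mem : (2 : ℤ) • ((2⁻¹ : ℚ) • toQlin uu) ∈ Lmap :=
  ⟨uu, uu_mem_LL, by
    funext j
    simp only [Pi.smul_apply, toQlin_apply]
    push_cast [zsmul_eq_mul, smul_eq_mul]
    ring⟩

lemma he12_mem : (2 : ℤ) • ((2⁻¹ : ℚ) • toQlin ee1) ∈ Lmap :=
  ⟨ee1, ee1_mem_LL, by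
    funext j
    simp only [Pi.smul_apply, toQlin_apply]
    push_cast [zsmul_eq_mul, smul_eq_mul]
    ring⟩

lemma he22_mem : (2 : ℤ) • ((2⁻¹ : ℚ) • toQlin ee2) ∈ Lmap :=
  ⟨ee2, ee2_mem_LL, by
    funext j
    simp only [Pi.smul_apply, toQlin_apply]
    push_cast [zsmul_eq_mul, smul_eq_mul]
    ring⟩

lemma indep (a b c : ℤ)
    (h : a • ((2⁻¹ : ℚ) • toQlin uu) + b • ((2⁻¹ : ℚ) • toQlin ee1) +
      c • ((2⁻¹ : ℚ) • toQlin ee2) ∈ Lmap) : 2 ∣ a ∧ 2 ∣ b ∧ 2 ∣ c := by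
  obtain ⟨z, hz, hzeq⟩ := h
  have h0 : ((z i00 : ℤ) : ℚ) = a • (2⁻¹ * ((1:ℤ):ℚ)) + b • (2⁻¹ * ((1:ℤ):ℚ))
      + c • (2⁻¹ * ((0:ℤ):ℚ)) := congrFun hzeq i00
  have h1 : ((z i01 : ℤ) : ℚ) = a • (2⁻¹ * ((1:ℤ):ℚ)) + b • (2⁻¹ * ((-1:ℤ):ℚ))
      + c • (2⁻¹ * ((0:ℤ):ℚ)) := congrFun hzeq i01
  have h2 : ((z i22 : ℤ) : ℚ) = a • (2⁻¹ * ((0:ℤ):ℚ)) + b • (2⁻¹ * ((0:ℤ):ℚ))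
      + c • (2⁻¹ * ((1:ℤ):ℚ)) := congrFun hzeq i22
  push_cast [zsmul_eq_mul] at h0 h1 h2
  have F0 : (2 * z i00 : ℤ) = a + b := by
    have : ((2 * z i00 : ℤ) : ℚ) = ((a + b : ℤ) : ℚ) := by push_cast; linarith
    exact_mod_cast this
  have F1 : (2 * z i01 : ℤ) = a - b := by
    have : ((2 * z i01 : ℤ) : ℚ) = ((a - b : ℤ) : ℚ) := by push_cast; linarith
    exact_mod_cast this
  have F2 : (2 * z i22 : ℤ) = c := by
    have : ((2 * z i22 : ℤ) : ℚ) = ((c : ℤ) : ℚ) := by push_cast; linarith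
    exact_mod_cast this
  obtain ⟨k, hk⟩ := (LL_mem z).1 hz
  refine ⟨?_, ?_, ?_⟩ <;> omega

lemma pair_mem_Lmap (a b c : ℤ) (ha : 2 ∣ a) (hb : 2 ∣ b) (hc : 2 ∣ c) :
    a • ((2⁻¹ : ℚ) • toQlin uu) + b • ((2⁻¹ : ℚ) • toQlin ee1) +
      c • ((2⁻¹ : ℚ) • toQlin ee2) ∈ Lmap := by
  obtain ⟨a', rfl⟩ := ha
  obtain ⟨b', rfl⟩ := hb
  obtain ⟨c', rfl⟩ := hc
  refine ⟨a' • uu + b' • ee1 + c' • ee2, ?_, ?_⟩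
  · show a' • uu + b' • ee1 + c' • ee2 ∈ LL
    rw [LL_mem]
    refine ⟨a', ?_⟩
    simp only [Pi.add_apply, Pi.smul_apply, smul_eq_mul]
    rw [show uu i00 = 1 from rfl, show ee1 i00 = 1 from rfl, show ee2 i00 = 0 from rfl,
      show uu i01 = 1 from rfl, show ee1 i01 = -1 from rfl, show ee2 i01 = 0 from rfl]
    ring
  · funext j
    simp only [Pi.add_apply, Pi.smul_apply, toQlin_apply, smul_eq_mul]
    push_cast [zsmul_eq_mul, smul_eq_mul]
    ring

noncomputable def d1 : Ldual := ⟨(2⁻¹ : ℚ) • toQlin uu, hu_mem⟩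
noncomputable def d2 : Ldual := ⟨(2⁻¹ : ℚ) • toQlin ee1, he1_mem⟩
noncomputable def d3 : Ldual := ⟨(2⁻¹ : ℚ) • toQlin ee2, he2_mem⟩

noncomputable def psi : (ℤ × ℤ × ℤ) →+ ((↥Ldual) ⧸ (Lmap.comap Ldual.subtype)) where
  toFun p := Submodule.Quotient.mk (p.1 • d1 + p.2.1 • d2 + p.2.2 • d3)
  map_zero' := by simp
  map_add' p q := by
    rw [← Submodule.Quotient.mk_add]
    congr 1
    simp only [Prod.fst_add, Prod.snd_add, add_smul]
    abel

lemma psi_surj : Function.Surjective psi := by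
  intro q
  obtain ⟨⟨x, hx⟩, rfl⟩ := Submodule.Quotient.mk_surjective _ q
  obtain ⟨α, β, γ, z, hz, hxe⟩ := dual_decomp x hx
  refine ⟨(α, β, γ), ?_⟩
  show Submodule.Quotient.mk _ = Submodule.Quotient.mk _
  rw [Submodule.Quotient.eq]
  refine Submodule.mem_comap.2 ?_
  have he : (Ldual.subtype) ((α, β, γ).1 • d1 + (α, β, γ).2.1 • d2 + (α, β, γ).2.2 • d3
      - ⟨x, hx⟩) = -(toQlin z) := by
    simp only [map_sub, map_add, map_smul, Submodule.coe_subtype, d1, d2, d3]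
    rw [hxe]
    abel
  rw [he]
  exact Submodule.neg_mem _ ⟨z, hz, rfl⟩

def chi : (ℤ × ℤ × ℤ) →+ (ZMod 2 × ZMod 2 × ZMod 2) where
  toFun p := ((p.1 : ZMod 2), (p.2.1 : ZMod 2), (p.2.2 : ZMod 2))
  map_zero' := by simp
  map_add' p q := by
    simp only [Prod.fst_add, Prod.snd_add]
    push_cast
    rfl

lemma chi_surj : Function.Surjective chi := by
  rintro ⟨u, v, w⟩
  obtain ⟨a, ha⟩ := ZMod.intCast_surjective u
  obtain ⟨b, hb⟩ := ZMod.intCast_surjective v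
  obtain ⟨c, hc⟩ := ZMod.intCast_surjective w
  exact ⟨(a, b, c), by simp [chi, ha, hb, hc]⟩

lemma psi_mem_iff (a b c : ℤ) : psi (a, b, c) = 0 ↔
    a • ((2⁻¹ : ℚ) • toQlin uu) + b • ((2⁻¹ : ℚ) • toQlin ee1) +
      c • ((2⁻¹ : ℚ) • toQlin ee2) ∈ Lmap := by
  show Submodule.Quotient.mk _ = 0 ↔ _
  rw [Submodule.Quotient.mk_eq_zero, Submodule.mem_comap]
  constructor
  · intro h
    have he : (Ldual.subtype) ((a, b, c).1 • d1 + (a, b, c).2.1 • d2 + (a, b, c).2.2 • d3)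
        = a • ((2⁻¹ : ℚ) • toQlin uu) + b • ((2⁻¹ : ℚ) • toQlin ee1) +
          c • ((2⁻¹ : ℚ) • toQlin ee2) := by
      simp only [map_add, map_smul, Submodule.coe_subtype, d1, d2, d3]
    rwa [he] at h
  · intro h
    have he : (Ldual.subtype) ((a, b, c).1 • d1 + (a, b, c).2.1 • d2 + (a, b, c).2.2 • d3)
        = a • ((2⁻¹ : ℚ) • toQlin uu) + b • ((2⁻¹ : ℚ) • toQlin ee1) +
          c • ((2⁻¹ : ℚ) • toQlin ee2) := by
      simp only [map_add, map_smul, Submodule.coe_subtype, d1, d2, d3]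
    rwa [he]

lemma ker_eq : psi.ker = chi.ker := by
  ext ⟨a, b, c⟩
  simp only [AddMonoidHom.mem_ker]
  rw [psi_mem_iff]
  constructor
  · intro h
    obtain ⟨ha, hb, hc⟩ := indep a b c h
    have : chi (a, b, c) = ((a : ZMod 2), (b : ZMod 2), (c : ZMod 2)) := rfl
    rw [this, Prod.ext_iff, Prod.ext_iff]
    refine ⟨?_, ?_, ?_⟩ <;>
      simp [ZMod.intCast_zmod_eq_zero_iff_dvd] <;> omega
  · intro h
    have h' : ((a : ZMod 2), (b : ZMod 2), (c : ZMod 2)) = (0 : ZMod 2 × ZMod 2 × ZMod 2) := h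
    rw [Prod.ext_iff, Prod.ext_iff] at h'
    obtain ⟨h1, h2, h3⟩ := h'
    exact pair_mem_Lmap a b c
      ((ZMod.intCast_zmod_eq_zero_iff_dvd a 2).1 h1)
      ((ZMod.intCast_zmod_eq_zero_iff_dvd b 2).1 h2)
      ((ZMod.intCast_zmod_eq_zero_iff_dvd c 2).1 h3)

lemma card8 : Nat.card ((↥Ldual) ⧸ (Lmap.comap Ldual.subtype)) = 8 := by
  have e1 := QuotientAddGroup.quotientKerEquivOfSurjective psi psi_surj
  have e2 := QuotientAddGroup.quotientKerEquivOfSurjective chi chi_surj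
  calc Nat.card ((↥Ldual) ⧸ (Lmap.comap Ldual.subtype))
      = Nat.card ((ℤ × ℤ × ℤ) ⧸ psi.ker) := (Nat.card_congr e1.toEquiv).symm
    _ = Nat.card ((ℤ × ℤ × ℤ) ⧸ chi.ker) := by rw [ker_eq]
    _ = Nat.card (ZMod 2 × ZMod 2 × ZMod 2) := Nat.card_congr e2.toEquiv
    _ = 8 := by simp [Nat.card_eq_fintype_card]
/-- the discriminant group `A_L = L^∨/L` of `L = ℤu ⊕ Λ` is `(ℤ/2)³`:
`u/2, e₁/2, e₂/2` lie in `L^∨`, their classes have order 2 in `L^∨/L`,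
`L^∨ = L + ℤ(u/2) + ℤ(e₁/2) + ℤ(e₂/2)`, and the three classes are independent over `𝔽₂`
(so they form a basis of `A_L` and `|A_L| = 8`). -/
theorem discriminant_group_LL :
    ((2⁻¹ : ℚ) • toQlin uu ∈ Ldual ∧ (2⁻¹ : ℚ) • toQlin ee1 ∈ Ldual ∧
      (2⁻¹ : ℚ) • toQlin ee2 ∈ Ldual) ∧
    (((2⁻¹ : ℚ) • toQlin uu ∉ Lmap ∧ (2 : ℤ) • ((2⁻¹ : ℚ) • toQlin uu) ∈ Lmap) ∧
      ((2⁻¹ : ℚ) • toQlin ee1 ∉ Lmap ∧ (2 : ℤ) • ((2⁻¹ : ℚ) • toQlin ee1) ∈ Lmap) ∧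
      ((2⁻¹ : ℚ) • toQlin ee2 ∉ Lmap ∧ (2 : ℤ) • ((2⁻¹ : ℚ) • toQlin ee2) ∈ Lmap)) ∧
    (Ldual = Lmap ⊔ Submodule.span ℤ
      {(2⁻¹ : ℚ) • toQlin uu, (2⁻¹ : ℚ) • toQlin ee1, (2⁻¹ : ℚ) • toQlin ee2}) ∧
    (∀ a b c : ℤ,
      a • ((2⁻¹ : ℚ) • toQlin uu) + b • ((2⁻¹ : ℚ) • toQlin ee1) +
          c • ((2⁻¹ : ℚ) • toQlin ee2) ∈ Lmap →
        2 ∣ a ∧ 2 ∣ b ∧ 2 ∣ c) ∧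
    Nat.card ((↥Ldual) ⧸ (Lmap.comap Ldual.subtype)) = 8 := by
  exact ⟨⟨hu_mem, he1_mem, he2_mem⟩,
    ⟨⟨hu_not_mem, hu2_mem⟩, ⟨he1_not_mem, he12_mem⟩, ⟨he2_not_mem, he22_mem⟩⟩,
    Ldual_eq, indep, card8⟩
end

section
/- Let g ∈ O(Λ) and let ĝ ∈ O(L) be the isometry of L = ℤu ⊕ Λ which fixes u and equals g on Λ; ĝ induces an automorphism ĝ* of the discriminant group A_L = L^∨/L. Then g belongs to Γ = Im(ρ) (equivalently, ĝ extends to an isometry of Λ̃) if and only if ĝ* fixes the class [(u+e₁)/2] ∈ A_L. -/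
/-- The orthogonal group `O(Λ)` of the lattice `Λ = u^⊥`. -/
noncomputable def OL : Subgroup ((↥Lam) ≃ₗ[ℤ] (↥Lam)) where
  carrier := {g | ∀ x y : Lam, B (g x : LamIdx → ℤ) (g y : LamIdx → ℤ) = B (x : LamIdx → ℤ) (y : LamIdx → ℤ)}
  mul_mem' := by
    intro a b ha hb x y
    have : ∀ z : Lam, (a * b) z = a (b z) := fun z => rfl
    rw [this, this]
    rw [ha (b x) (b y), hb x y]
  one_mem' := by intro x y; rfl
  inv_mem' := by
    intro g hg x y
    have h := hg (g⁻¹ x) (g⁻¹ y)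
    have e : ∀ z : Lam, g (g⁻¹ z) = z := fun z => g.apply_symm_apply z
    rw [e, e] at h
    exact h.symm

/-- The subgroup `Γ = Im(ρ) ≤ O(Λ)`: restrictions to `Λ = u^⊥` of isometries of `Λ̃`
fixing `u`. -/
noncomputable def Gamma : Subgroup ((↥Lam) ≃ₗ[ℤ] (↥Lam)) where
  carrier := {h | ∃ g : (LamIdx → ℤ) ≃ₗ[ℤ] (LamIdx → ℤ),
    (∀ x y : LamIdx → ℤ, B (g x) (g y) = B x y) ∧ g uu = uu ∧
    ∀ x : Lam, (h x : LamIdx → ℤ) = g (x : LamIdx → ℤ)}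
  mul_mem' := by
    rintro a b ⟨ga, hga, hgau, hgaa⟩ ⟨gb, hgb, hgbu, hgbb⟩
    refine ⟨ga * gb, fun x y => ?_, ?_, fun x => ?_⟩
    · have : ∀ z, (ga * gb) z = ga (gb z) := fun z => rfl
      rw [this, this, hga, hgb]
    · have : (ga * gb) uu = ga (gb uu) := rfl
      rw [this, hgbu, hgau]
    · have h1 : (a * b) x = a (b x) := rfl
      have h2 : (ga * gb) (x : LamIdx → ℤ) = ga (gb (x : LamIdx → ℤ)) := rfl
      rw [h1, h2, hgaa, hgbb]
  one_mem' := ⟨1, fun x y => rfl, rfl, fun x => rfl⟩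
  inv_mem' := by
    rintro h ⟨g, hg, hgu, hgh⟩
    refine ⟨g⁻¹, fun x y => ?_, ?_, fun x => ?_⟩
    · have e : ∀ z, g (g⁻¹ z) = z := fun z => g.apply_symm_apply z
      have := hg (g⁻¹ x) (g⁻¹ y)
      rw [e, e] at this
      exact this.symm
    · have : g⁻¹ (g uu) = uu := g.symm_apply_apply uu
      rw [hgu] at this
      exact this
    · apply g.injective
      have e : ∀ z, g (g⁻¹ z) = z := fun z => g.apply_symm_apply z
      rw [e]
      rw [← hgh (h⁻¹ x)]
      have : h (h⁻¹ x) = x := h.apply_symm_apply x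
      rw [this]

/-- `e`, the integer vector with `2e = u + e₁`. -/
def ee : LamIdx → ℤ := fun i => if i = Sum.inl (0, 0) then 1 else 0

lemma gram_symm : ∀ i j, gram i j = gram j i :=
  of_decide_eq_true (inst := @Fintype.decidableForallFintype _ _
    (fun i => @Fintype.decidableForallFintype _ _ (fun j => Int.decEq _ _) _) _) rfl

lemma Tinj : Function.Injective toQlin := by
  intro x y h
  funext i
  have := congrFun h i
  simp only [toQlin, LinearMap.coe_mk, AddHom.coe_mk] at this
  exact_mod_cast this

lemma Bxuu (x : LamIdx → ℤ) : B x uu = x (Sum.inl (0, 0)) + x (Sum.inl (0, 1)) := by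
  rw [B, Matrix.toLinearMap₂'_apply]
  simp [Fintype.sum_sum_type, Fintype.sum_prod_type, Fin.sum_univ_succ, uu, gram, E8mat]

lemma Bsymm (x y : LamIdx → ℤ) : B x y = B y x := by
  rw [B, Matrix.toLinearMap₂'_apply, Matrix.toLinearMap₂'_apply, Finset.sum_comm]
  refine Finset.sum_congr rfl fun i _ => Finset.sum_congr rfl fun j _ => ?_
  rw [gram_symm]
  simp only [smul_eq_mul]
  ring

lemma castB (x y : LamIdx → ℤ) : Bq (toQlin x) (toQlin y) = ((B x y : ℤ) : ℚ) := by
  rw [B, Bq, Matrix.toLinearMap₂'_apply, Matrix.toLinearMap₂'_apply]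
  push_cast
  refine Finset.sum_congr rfl fun i _ => Finset.sum_congr rfl fun j _ => ?_
  simp [toQlin, gramQ]

lemma mem_Lam_iff (x : LamIdx → ℤ) : x ∈ Lam ↔ B x uu = 0 := by
  rw [Lam, LinearMap.mem_ker]
  rfl

lemma B_mem_uu {x : LamIdx → ℤ} (hx : x ∈ Lam) : B x uu = 0 := (mem_Lam_iff x).1 hx

lemma Buuuu : B uu uu = 2 := by rw [Bxuu]; rfl

lemma ee1_mem : ee1 ∈ Lam := by rw [mem_Lam_iff, Bxuu]; rfl

lemma two_ee : (2 : ℤ) • ee = uu + ee1 := by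
  funext i
  by_cases h0 : i = Sum.inl (0, 0)
  · simp [ee, uu, ee1, h0]
  · by_cases h1 : i = Sum.inl (0, 1)
    · subst h1; simp [ee, uu, ee1]
    · simp only [Pi.smul_apply, Pi.add_apply, ee, uu, ee1, if_neg h0, if_neg h1]
      simp

lemma half_eq : (2⁻¹ : ℚ) • (toQlin uu + toQlin ee1) = toQlin ee := by
  rw [← map_add, ← two_ee, map_smul]
  funext i
  simp [toQlin]

lemma Beeuu : B ee uu = 1 := by rw [Bxuu]; rfl

lemma integrality (g : (↥Lam) ≃ₗ[ℤ] (↥Lam))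
    (gq : (LamIdx → ℚ) ≃ₗ[ℚ] (LamIdx → ℚ))
    (hgu : gq (toQlin uu) = toQlin uu)
    (hgext : ∀ x : Lam, gq (toQlin (x : LamIdx → ℤ)) = toQlin ((g x : Lam) : LamIdx → ℤ))
    (hd : gq (toQlin ee) - toQlin ee ∈ Lmap) :
    ∀ x : LamIdx → ℤ, ∃ y : LamIdx → ℤ, toQlin y = gq (toQlin x) := by
  obtain ⟨w, hwLL, hw⟩ := hd
  intro x
  set a := x (Sum.inl (0, 0)) with ha
  set b := x (Sum.inl (0, 1)) with hb
  set z := x - b • uu - (a - b) • ee with hzdef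
  have hz : z ∈ Lam := by
    rw [mem_Lam_iff, hzdef]
    rw [map_sub, map_sub, map_smul, map_smul]
    simp only [LinearMap.sub_apply, LinearMap.smul_apply, smul_eq_mul]
    rw [Bxuu x, Buuuu, Beeuu, ← ha, ← hb]
    ring
  refine ⟨b • uu + (a - b) • (ee + w) + ((g ⟨z, hz⟩ : Lam) : LamIdx → ℤ), ?_⟩
  have hge : gq (toQlin ee) = toQlin ee + toQlin w := by rw [hw]; abel
  have hx : x = b • uu + (a - b) • ee + z := by rw [hzdef]; abel
  have h5 : gq (toQlin z) = toQlin ((g ⟨z, hz⟩ : Lam) : LamIdx → ℤ) := hgext ⟨z, hz⟩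
  conv_rhs => rw [hx]
  simp only [map_add, map_zsmul, hgu, hge, h5]

lemma Bq_four (v w : LamIdx → ℚ) :
    Bq ((2 : ℤ) • v) ((2 : ℤ) • w) = (4 : ℤ) • Bq v w := by
  rw [map_zsmul Bq, LinearMap.smul_apply, map_zsmul, smul_smul]
  norm_num

lemma qpres (g : (↥Lam) ≃ₗ[ℤ] (↥Lam)) (hg : g ∈ OL)
    (gq : (LamIdx → ℚ) ≃ₗ[ℚ] (LamIdx → ℚ))
    (hgu : gq (toQlin uu) = toQlin uu)
    (hgext : ∀ x : Lam, gq (toQlin (x : LamIdx → ℤ)) = toQlin ((g x : Lam) : LamIdx → ℤ)) :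
    ∀ x y : LamIdx → ℤ, Bq (gq (toQlin x)) (gq (toQlin y)) = Bq (toQlin x) (toQlin y) := by
  have hg' : ∀ x y : Lam, B (x : LamIdx → ℤ) (y : LamIdx → ℤ)
      = B ((g x : Lam) : LamIdx → ℤ) ((g y : Lam) : LamIdx → ℤ) := fun x y => (hg x y).symm
  intro x y
  set c := B x uu with hc
  set c' := B y uu with hc'
  set z := (2 : ℤ) • x - c • uu with hzdef
  set z' := (2 : ℤ) • y - c' • uu with hz'def
  have hz : z ∈ Lam := by
    rw [mem_Lam_iff, hzdef, map_sub, map_smul, map_smul]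
    simp only [LinearMap.sub_apply, LinearMap.smul_apply, smul_eq_mul]
    rw [← hc, Buuuu]; ring
  have hz' : z' ∈ Lam := by
    rw [mem_Lam_iff, hz'def, map_sub, map_smul, map_smul]
    simp only [LinearMap.sub_apply, LinearMap.smul_apply, smul_eq_mul]
    rw [← hc', Buuuu]; ring
  have hx2 : (2 : ℤ) • x = c • uu + z := by rw [hzdef]; abel
  have hy2 : (2 : ℤ) • y = c' • uu + z' := by rw [hz'def]; abel
  have h5 : gq (toQlin z) = toQlin ((g ⟨z, hz⟩ : Lam) : LamIdx → ℤ) := hgext ⟨z, hz⟩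
  have h5' : gq (toQlin z') = toQlin ((g ⟨z', hz'⟩ : Lam) : LamIdx → ℤ) := hgext ⟨z', hz'⟩
  have e1 : (2 : ℤ) • gq (toQlin x) = c • toQlin uu + toQlin ((g ⟨z, hz⟩ : Lam) : LamIdx → ℤ) := by
    rw [← map_zsmul gq, ← map_zsmul toQlin, hx2]
    simp only [map_add, map_zsmul, hgu, h5]
  have e2 : (2 : ℤ) • gq (toQlin y) = c' • toQlin uu + toQlin ((g ⟨z', hz'⟩ : Lam) : LamIdx → ℤ) := by
    rw [← map_zsmul gq, ← map_zsmul toQlin, hy2]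
    simp only [map_add, map_zsmul, hgu, h5']
  have e3 : (2 : ℤ) • toQlin x = c • toQlin uu + toQlin z := by
    rw [← map_zsmul toQlin, hx2, map_add, map_zsmul]
  have e4 : (2 : ℤ) • toQlin y = c' • toQlin uu + toQlin z' := by
    rw [← map_zsmul toQlin, hy2, map_add, map_zsmul]
  have expand : ∀ (v v' : LamIdx → ℤ), v ∈ Lam → v' ∈ Lam →
      Bq (c • toQlin uu + toQlin v) (c' • toQlin uu + toQlin v')
        = ((c * c' * 2 + B v v' : ℤ) : ℚ) := by
    intro v v' hv hv'
    simp only [map_add, LinearMap.add_apply, map_zsmul, LinearMap.smul_apply]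
    rw [castB, castB, castB, castB, Buuuu, Bsymm uu v', B_mem_uu hv', B_mem_uu hv]
    simp only [zsmul_eq_mul]
    push_cast
    ring
  have l : Bq ((2 : ℤ) • gq (toQlin x)) ((2 : ℤ) • gq (toQlin y))
      = Bq ((2 : ℤ) • toQlin x) ((2 : ℤ) • toQlin y) := by
    rw [e1, e2, e3, e4, expand _ _ (g ⟨z, hz⟩).2 (g ⟨z', hz'⟩).2, expand _ _ hz hz',
      ← hg' ⟨z, hz⟩ ⟨z', hz'⟩]
  rw [Bq_four, Bq_four] at l
  exact smul_right_injective ℚ (by norm_num : (4 : ℤ) ≠ 0) l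

/-- for `g ∈ O(Λ)`, let `ĝ` be the isometry of `L = ℤu ⊕ Λ` fixing `u` and
equal to `g` on `Λ` (here represented by its `ℚ`-linear extension `gq` to `L ⊗ ℚ`).
Then `g ∈ Γ` (equivalently, `ĝ` extends to an isometry of `Λ̃`) if and only if the
induced automorphism of the discriminant group `A_L = L^∨/L` fixes the class
`[(u+e₁)/2]`. -/
theorem mem_Gamma_iff_fixes_class (g : (↥Lam) ≃ₗ[ℤ] (↥Lam)) (hg : g ∈ OL)
    (gq : (LamIdx → ℚ) ≃ₗ[ℚ] (LamIdx → ℚ))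
    (hgu : gq (toQlin uu) = toQlin uu)
    (hgext : ∀ x : Lam, gq (toQlin (x : LamIdx → ℤ)) = toQlin ((g x : Lam) : LamIdx → ℤ)) :
    g ∈ Gamma ↔
      gq ((2⁻¹ : ℚ) • (toQlin uu + toQlin ee1)) -
        (2⁻¹ : ℚ) • (toQlin uu + toQlin ee1) ∈ Lmap := by
  rw [half_eq]
  constructor
  · rintro ⟨gt, hgt, hgtu, hgta⟩
    have h1 : gq (toQlin ee1) = toQlin ((g ⟨ee1, ee1_mem⟩ : Lam) : LamIdx → ℤ) :=
      hgext ⟨ee1, ee1_mem⟩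
    rw [hgta ⟨ee1, ee1_mem⟩] at h1
    have h2e : gq (toQlin ee) = toQlin (gt ee) := by
      apply smul_right_injective (LamIdx → ℚ) (show (2 : ℤ) ≠ 0 by norm_num)
      calc (2 : ℤ) • gq (toQlin ee) = gq (toQlin ((2 : ℤ) • ee)) := by
            rw [map_zsmul toQlin, map_zsmul gq]
        _ = toQlin uu + toQlin (gt ee1) := by rw [two_ee, map_add, map_add, hgu, h1]
        _ = toQlin (gt uu) + toQlin (gt ee1) := by rw [hgtu]
        _ = toQlin (gt ((2 : ℤ) • ee)) := by rw [two_ee, map_add gt, map_add toQlin]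
        _ = (2 : ℤ) • toQlin (gt ee) := by rw [map_zsmul gt, map_zsmul toQlin]
    rw [h2e, ← map_sub toQlin]
    have hmem : gt ee - ee ∈ Lam := by
      rw [mem_Lam_iff]
      simp only [map_sub, LinearMap.sub_apply]
      have h6 : B (gt ee) uu = B ee uu := by
        conv_lhs => rw [← hgtu]
        exact hgt ee uu
      rw [h6]
      ring
    exact Submodule.mem_map_of_mem (Submodule.mem_sup_right hmem)
  · intro hd
    -- transfer the hypotheses to the inverse maps
    have hgu' : gq.symm (toQlin uu) = toQlin uu := by
      conv_lhs => rw [← hgu]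
      exact gq.symm_apply_apply _
    have hgext' : ∀ x : Lam, gq.symm (toQlin (x : LamIdx → ℤ))
        = toQlin ((g.symm x : Lam) : LamIdx → ℤ) := by
      intro x
      have h := hgext (g.symm x)
      rw [g.apply_symm_apply] at h
      rw [← h, gq.symm_apply_apply]
    have hLmap : ∀ v ∈ LL, gq.symm (toQlin v) ∈ Lmap := by
      intro v hv
      rw [LL, Submodule.mem_sup] at hv
      obtain ⟨p, hp, q, hq, rfl⟩ := hv
      rw [Submodule.mem_span_singleton] at hp
      obtain ⟨cc, rfl⟩ := hp
      have h7 : gq.symm (toQlin q) = toQlin ((g.symm ⟨q, hq⟩ : Lam) : LamIdx → ℤ) :=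
        hgext' ⟨q, hq⟩
      refine Submodule.mem_map.2 ⟨cc • uu + ((g.symm ⟨q, hq⟩ : Lam) : LamIdx → ℤ), ?_, ?_⟩
      · exact Submodule.add_mem _
          (Submodule.mem_sup_left (Submodule.smul_mem _ cc (Submodule.mem_span_singleton_self uu)))
          (Submodule.mem_sup_right (g.symm ⟨q, hq⟩).2)
      · simp only [map_add, map_zsmul, hgu', h7]
    have hd' : gq.symm (toQlin ee) - toQlin ee ∈ Lmap := by
      obtain ⟨w1, hw1, hweq⟩ := hd
      have h8 : gq.symm (toQlin ee) - toQlin ee = -(gq.symm (gq (toQlin ee) - toQlin ee)) := by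
        rw [map_sub, gq.symm_apply_apply]
        abel
      rw [h8, ← hweq]
      exact neg_mem (hLmap w1 hw1)
    have key := integrality g gq hgu hgext hd
    have key' := integrality g.symm gq.symm hgu' hgext' hd'
    choose F hF using key
    choose G hG using key'
    have hFG : ∀ x, G (F x) = x := fun x => Tinj (by rw [hG, hF, gq.symm_apply_apply])
    have hGF : ∀ x, F (G x) = x := fun x => Tinj (by rw [hF, hG, gq.apply_symm_apply])
    have hFadd : ∀ x y, F (x + y) = F x + F y := fun x y =>
      Tinj (by rw [hF, map_add toQlin, map_add toQlin, hF, hF, map_add gq])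
    have hFsmul : ∀ (c : ℤ) (x), F (c • x) = c • F x := fun c x =>
      Tinj (by rw [hF, map_zsmul toQlin, map_zsmul toQlin, hF, map_zsmul gq])
    let gt : (LamIdx → ℤ) ≃ₗ[ℤ] (LamIdx → ℤ) :=
      { toFun := F
        map_add' := hFadd
        map_smul' := hFsmul
        invFun := G
        left_inv := hFG
        right_inv := hGF }
    have hq := qpres g hg gq hgu hgext
    refine ⟨gt, ?_, ?_, ?_⟩
    · intro x y
      have q := hq x y
      rw [← hF x, ← hF y, castB, castB] at q
      show B (F x) (F y) = B x y
      exact_mod_cast q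
    · exact Tinj (by show toQlin (F uu) = toQlin uu; rw [hF, hgu])
    · intro x
      refine (Tinj ?_).symm
      show toQlin (F (x : LamIdx → ℤ)) = toQlin ((g x : Lam) : LamIdx → ℤ)
      rw [hF, hgext]
end

section
/- Let Λ' be a free ℤ-module with symmetric bilinear form (·,·) and D ∈ Λ' with (D,D) = 10. In the Mukai lattice M(Λ') set v := (2, D, 2), w := (−1, 0, 1) and s := (5, 2D, 5). Then v, w, s are pairwise orthogonal for the Mukai pairing, ⟨v,v⟩ = 2, ⟨w,w⟩ = 2, ⟨s,s⟩ = −10, and the orthogonal complement of {v, w, s} in M(Λ') equals {(0, x, 0) : x ∈ Λ', (x,D) = 0}. -/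
/-- The Mukai pairing `⟨(a,b,c),(a',b',c')⟩ = (b,b') − a·c' − c·a'` on the Mukai lattice
`M(Λ') = ℤ ⊕ Λ' ⊕ ℤ` of a lattice `Λ'`. -/
def mukaiZ {Λ' : Type*} [AddCommGroup Λ'] [Module ℤ Λ']
    (B : Λ' →ₗ[ℤ] Λ' →ₗ[ℤ] ℤ) (p q : ℤ × Λ' × ℤ) : ℤ :=
  B p.2.1 q.2.1 - p.1 * q.2.2 - p.2.2 * q.1

/-- let `Λ'` be a lattice and `D ∈ Λ'` with `(D,D) = 10`.  In the Mukai
lattice set `v = (2,D,2)`, `w = (−1,0,1)`, `s = (5,2D,5)`.  Then `v,w,s` are pairwise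
orthogonal, `⟨v,v⟩ = 2`, `⟨w,w⟩ = 2`, `⟨s,s⟩ = −10`, and the orthogonal complement of
`{v,w,s}` in `M(Λ')` is `{(0,x,0) : x ∈ Λ', (x,D) = 0}`. -/
theorem mukai_orthogonal_complement
    (Λ' : Type*) [AddCommGroup Λ'] [Module ℤ Λ'] [Module.Free ℤ Λ'] [Module.Finite ℤ Λ']
    (B : Λ' →ₗ[ℤ] Λ' →ₗ[ℤ] ℤ) (hsymm : ∀ x y : Λ', B x y = B y x)
    (D : Λ') (hD : B D D = 10) :
    mukaiZ B ((2 : ℤ), D, (2 : ℤ)) ((-1 : ℤ), 0, (1 : ℤ)) = 0 ∧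
    mukaiZ B ((2 : ℤ), D, (2 : ℤ)) ((5 : ℤ), (2 : ℤ) • D, (5 : ℤ)) = 0 ∧
    mukaiZ B ((-1 : ℤ), 0, (1 : ℤ)) ((5 : ℤ), (2 : ℤ) • D, (5 : ℤ)) = 0 ∧
    mukaiZ B ((2 : ℤ), D, (2 : ℤ)) ((2 : ℤ), D, (2 : ℤ)) = 2 ∧
    mukaiZ B ((-1 : ℤ), 0, (1 : ℤ)) ((-1 : ℤ), 0, (1 : ℤ)) = 2 ∧
    mukaiZ B ((5 : ℤ), (2 : ℤ) • D, (5 : ℤ)) ((5 : ℤ), (2 : ℤ) • D, (5 : ℤ)) = -10 ∧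
    ∀ m : ℤ × Λ' × ℤ,
      (mukaiZ B m ((2 : ℤ), D, (2 : ℤ)) = 0 ∧
        mukaiZ B m ((-1 : ℤ), 0, (1 : ℤ)) = 0 ∧
        mukaiZ B m ((5 : ℤ), (2 : ℤ) • D, (5 : ℤ)) = 0) ↔
      ∃ x : Λ', B x D = 0 ∧ m = ((0 : ℤ), x, (0 : ℤ)) := by
  refine ⟨?_, ?_, ?_, ?_, ?_, ?_, ?_⟩
  · simp [mukaiZ]
  · simp [mukaiZ, hD]
  · simp [mukaiZ]
  · simp [mukaiZ, hD]
  · simp [mukaiZ]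
  · simp [mukaiZ, hD]
  · rintro ⟨a, b, c⟩
    constructor
    · rintro ⟨h1, h2, h3⟩
      simp only [mukaiZ, map_smul, map_zero, LinearMap.zero_apply, smul_eq_mul] at h1 h2 h3
      rw [show ((2:ℤ) • D) = D + D from two_zsmul D, map_add] at h3
      have hac : a = c := by omega
      have h4 : B b D = 2 * a + 2 * c := by linarith
      have h5 : (2:ℤ) * B b D = 5 * a + 5 * c := by linarith
      have ha : a = 0 := by omega
      have hc : c = 0 := by omega
      exact ⟨b, by omega, by simp [ha, hc]⟩
    · rintro ⟨x, hx, h⟩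
      rw [h]
      simp [mukaiZ, hx]
end
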